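/- arXiv:2111.11580 — 6 statements merged into one kernel-verified Lean document; each statement's English description precedes it below -/
import Mathlib

section
/- There exists an element ζ ∈ 𝒪_0 whose multiplicative order is exactly q − 1, and for every such ζ and every integer m ≥ 1, each unit x of the ring R_m can be written uniquely as x = ζ^i · u with 0 ≤ i < q − 1 and u ∈ 1 + 𝔪̃_m; in other words, multiplication gives a group isomorphism ⟨ζ⟩ × (1 + 𝔪̃_m) ≅ R_m^×. -/
/-- The order `R_m = 𝒪_0 + 𝔪^m 𝒪_F`, as a subset of `F`. -/
def RmSet {F : Type} [Field F] (O0 OF : Subring F) (pi : F) (m : ℕ) : Set F :=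
  {x : F | ∃ a ∈ O0, ∃ b ∈ OF, x = a + pi ^ m * b}

/-- The set `𝔪̃_m = p 𝒪_0 + 𝔪^m 𝒪_F`, as a subset of `F`. -/
def mTildeSet {F : Type} [Field F] (p : ℕ) (O0 OF : Subring F) (pi : F) (m : ℕ) : Set F :=
  {x : F | ∃ a ∈ O0, ∃ b ∈ OF, x = (p : F) * a + pi ^ m * b}

/-- The set `1 + S` for a subset `S ⊆ F`. -/
def onePlusSet {F : Type} [Field F] (S : Set F) : Set F := {u : F | u - 1 ∈ S}


lemma key_pow {R : Type*} [CommRing R] (p r q n : ℕ) (hq : q = r * p) (hn : 1 ≤ n)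
    (x y : R) (h : ((p : R)) ^ n ∣ x - y) : ((p : R)) ^ (n + 1) ∣ x ^ q - y ^ q := by
  have hp1 : (p : R) ∣ x - y := dvd_trans (dvd_pow_self (p : R) (by omega)) h
  set X := x ^ r with hX
  set Y := y ^ r with hY
  have h2 : ((p : R)) ^ n ∣ X - Y := h.trans (sub_dvd_pow_sub_pow x y r)
  have hYX : (p : R) ∣ Y - X :=
    (dvd_sub_comm).mp (dvd_trans hp1 (sub_dvd_pow_sub_pow x y r))
  have hterm : ∀ i ∈ Finset.range p, (p : R) ∣ (X ^ i * Y ^ (p - 1 - i) - X ^ (p - 1)) := by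
    intro i hi
    rw [Finset.mem_range] at hi
    have hrw : X ^ i * Y ^ (p - 1 - i) - X ^ (p - 1) = X ^ i * (Y ^ (p - 1 - i) - X ^ (p - 1 - i)) := by
      rw [mul_sub, ← pow_add]
      congr 3
      omega
    rw [hrw]
    exact Dvd.dvd.mul_left (hYX.trans (sub_dvd_pow_sub_pow Y X _)) _
  have hS : (p : R) ∣ ∑ i ∈ Finset.range p, X ^ i * Y ^ (p - 1 - i) := by
    have hsplit : (∑ i ∈ Finset.range p, X ^ i * Y ^ (p - 1 - i))
        = (∑ i ∈ Finset.range p, (X ^ i * Y ^ (p - 1 - i) - X ^ (p - 1))) + (p : R) * X ^ (p-1) := by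
      rw [Finset.sum_sub_distrib, Finset.sum_const, Finset.card_range, nsmul_eq_mul]
      ring
    rw [hsplit]
    exact dvd_add (Finset.dvd_sum hterm) (Dvd.dvd.mul_right dvd_rfl _)
  have hfact : x ^ q - y ^ q = (∑ i ∈ Finset.range p, X ^ i * Y ^ (p - 1 - i)) * (X - Y) := by
    rw [hq, pow_mul, pow_mul, ← hX, ← hY]
    exact (geom_sum₂_mul X Y p).symm
  rw [hfact, pow_succ]
  exact mul_comm (p:R) ((p:R)^n) ▸ mul_dvd_mul hS h2

lemma subring_dvd_iff {F : Type} [Field F] (O : Subring F) (p : ℕ) (n : ℕ) (x y : ↥O) :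
    ((p : ↥O)) ^ n ∣ x - y ↔ ∃ c ∈ O, (x : F) - y = (p : F) ^ n * c := by
  constructor
  · rintro ⟨c, hc⟩
    refine ⟨c, c.2, ?_⟩
    have := congrArg (fun t : ↥O => (t : F)) hc
    push_cast at this
    convert this using 2
  · rintro ⟨c, hcO, hc⟩
    refine ⟨⟨c, hcO⟩, ?_⟩
    apply Subtype.ext
    push_cast
    exact hc

set_option maxHeartbeats 1600000 in
set_option synthInstance.maxHeartbeats 400000 in
theorem stmt_2
    (p : ℕ) (hp : Nat.Prime p)
    (F : Type) [Field F]
    (OF O0 : Subring F) (hO0F : O0 ≤ OF)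
    (pi : F) (hpimem : pi ∈ OF) (hpi0 : pi ≠ 0)
    -- `𝒪_F` is the valuation ring of `F`:
    (hval : ∀ x : F, x ≠ 0 → x ∈ OF ∨ x⁻¹ ∈ OF)
    -- `𝔪 = π 𝒪_F` is the maximal ideal of `𝒪_F`:
    (hmax : ∀ x ∈ OF, (¬ ∃ y ∈ OF, x = pi * y) → ∃ z ∈ OF, x * z = 1)
    (hpinotunit : ¬ ∃ z ∈ OF, pi * z = 1)
    -- the absolute ramification index `e`, i.e. `p 𝒪_F = 𝔪^e`:
    (e : ℕ) (he : 1 ≤ e)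
    (hram : ∃ u ∈ OF, (∃ w ∈ OF, u * w = 1) ∧ (p : F) = pi ^ e * u)
    -- `𝒪_0` is a complete discrete valuation ring with maximal ideal `p 𝒪_0`:
    (hO0dvr : ∀ x ∈ O0, x ≠ (0 : F) →
      ∃ n : ℕ, ∃ u ∈ O0, (∃ w ∈ O0, u * w = 1) ∧ x = (p : F) ^ n * u)
    (hO0complete : ∀ a : ℕ → F, (∀ n, a n ∈ O0) →
      (∀ n, ∃ y ∈ O0, a (n + 1) - a n = (p : F) ^ n * y) →
      ∃ L ∈ O0, ∀ n, ∃ y ∈ O0, L - a n = (p : F) ^ n * y)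
    -- `𝒪_F` is a finitely generated `𝒪_0`-module:
    (hfg : ∃ s : Finset F, (↑s : Set F) ⊆ (OF : Set F) ∧
      ∀ x ∈ OF, ∃ c : F → F, (∀ i ∈ s, c i ∈ O0) ∧ x = ∑ i ∈ s, c i * i)
    -- the inclusion `𝒪_0 ⊆ 𝒪_F` induces an isomorphism of residue fields:
    (hres_surj : ∀ x ∈ OF, ∃ a ∈ O0, ∃ y ∈ OF, x - a = pi * y)
    (hres_inj : ∀ a ∈ O0, (∃ y ∈ OF, a = pi * y) → ∃ b ∈ O0, a = (p : F) * b)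
    -- the residue field is finite of cardinality `q`:
    (q : ℕ)
    (hq : ∃ s : Finset F, s.card = q ∧ (↑s : Set F) ⊆ (OF : Set F) ∧
      (∀ x ∈ OF, ∃ a ∈ s, ∃ y ∈ OF, x - a = pi * y) ∧
      (∀ a ∈ s, ∀ b ∈ s, (∃ y ∈ OF, a - b = pi * y) → a = b))
    :
    -- there is an element of `𝒪_0` of multiplicative order exactly `q - 1`:
    (∃ z : F, z ∈ O0 ∧ z ^ (q - 1) = 1 ∧ ∀ j : ℕ, 0 < j → j < q - 1 → z ^ j ≠ 1) ∧
    -- for every such element and every `m ≥ 1`, each unit of `R_m` decomposes uniquely: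
    (∀ z : F, z ∈ O0 → z ^ (q - 1) = 1 → (∀ j : ℕ, 0 < j → j < q - 1 → z ^ j ≠ 1) →
      ∀ m : ℕ, 1 ≤ m → ∀ x : F, x ∈ RmSet O0 OF pi m →
        (∃ w ∈ RmSet O0 OF pi m, x * w = 1) →
        ∃! iu : ℕ × F, iu.1 < q - 1 ∧ iu.2 ∈ onePlusSet (mTildeSet p O0 OF pi m) ∧
          x = z ^ iu.1 * iu.2) := by

  classical
  obtain ⟨uu, huuOF, ⟨ww, hwwOF, huw⟩, hpeq⟩ := hram
  have hpF : (p : F) ≠ 0 := by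
    rw [hpeq]
    apply mul_ne_zero (pow_ne_zero _ hpi0)
    intro h0
    rw [h0, zero_mul] at huw
    exact zero_ne_one huw
  have hpipow : pi ^ e = pi * pi ^ (e - 1) := by
    conv_lhs => rw [show e = (e-1)+1 from by omega]
    rw [pow_succ]
    ring
  have hppi : ∃ y ∈ OF, (p : F) = pi * y :=
    ⟨pi ^ (e-1) * uu, mul_mem (pow_mem hpimem _) huuOF, by rw [hpeq, hpipow]; ring⟩
  -- the residue field
  set Mi : Ideal ↥OF := Ideal.span {(⟨pi, hpimem⟩ : ↥OF)} with hMidef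
  have hMmem : ∀ x : ↥OF, x ∈ Mi ↔ ∃ y ∈ OF, (x : F) = pi * y := by
    intro x
    rw [hMidef, Ideal.mem_span_singleton]
    constructor
    · rintro ⟨c, hc⟩
      exact ⟨c, c.2, by rw [hc]; push_cast; ring⟩
    · rintro ⟨y, hy, hxy⟩
      exact ⟨⟨y, hy⟩, Subtype.ext (by push_cast; exact hxy)⟩
  have hnotone : (1 : ↥OF) ∉ Mi := by
    rw [hMmem]
    rintro ⟨y, hy, h1⟩
    exact hpinotunit ⟨y, hy, h1.symm⟩
  letI kField : Field (↥OF ⧸ Mi) := by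
    apply IsField.toField
    refine ⟨⟨0, 1, ?_⟩, mul_comm, ?_⟩
    · intro h01
      apply hnotone
      have : Ideal.Quotient.mk Mi 1 = 0 := by
        rw [map_one]; exact h01.symm
      exact Ideal.Quotient.eq_zero_iff_mem.mp this
    · intro a ha
      obtain ⟨xx, rfl⟩ := Ideal.Quotient.mk_surjective a
      have hxM : ¬ ∃ y ∈ OF, (xx : F) = pi * y := by
        intro h
        exact ha (Ideal.Quotient.eq_zero_iff_mem.mpr ((hMmem xx).mpr h))
      obtain ⟨zz, hzz, hxz⟩ := hmax xx xx.2 hxM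
      refine ⟨Ideal.Quotient.mk Mi ⟨zz, hzz⟩, ?_⟩
      rw [← map_mul, show (xx * ⟨zz, hzz⟩ : ↥OF) = 1 from Subtype.ext (by push_cast; exact hxz), map_one]
  set res : ↥OF →+* ↥OF ⧸ Mi := Ideal.Quotient.mk Mi with hresdef
  have hres_eq0 : ∀ x : ↥OF, res x = 0 ↔ ∃ y ∈ OF, (x : F) = pi * y := by
    intro x
    rw [hresdef, Ideal.Quotient.eq_zero_iff_mem, hMmem]
  have hres_eq : ∀ x y : ↥OF, res x = res y ↔ ∃ c ∈ OF, (x : F) - y = pi * c := by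
    intro x y
    rw [hresdef, Ideal.Quotient.eq, hMmem]
    constructor
    · rintro ⟨c, hc, hceq⟩
      refine ⟨c, hc, ?_⟩
      push_cast at hceq
      exact hceq
    · rintro ⟨c, hc, hceq⟩
      refine ⟨c, hc, ?_⟩
      push_cast
      exact hceq
  have hker_p : ∀ (t : F) (ht : t ∈ OF), (∃ b ∈ OF, t = (p:F) * b) → res ⟨t, ht⟩ = 0 := by
    rintro t ht ⟨b, hb, htb⟩
    obtain ⟨yp, hyp, hypeq⟩ := hppi
    refine (hres_eq0 _).mpr ⟨yp * b, mul_mem hyp hb, ?_⟩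
    show t = pi * (yp * b)
    rw [htb, hypeq]
    ring
  -- Fintype and card
  obtain ⟨s, hscard, hsOF, hsrep, hsinj⟩ := hq
  have hmapbij : Function.Bijective (fun (x : ↥s) => res ⟨x.1, hsOF x.2⟩) := by
    constructor
    · intro a b hab
      apply Subtype.ext
      apply hsinj a.1 a.2 b.1 b.2
      obtain ⟨c, hc, hceq⟩ := (hres_eq _ _).mp hab
      exact ⟨c, hc, hceq⟩
    · intro c
      obtain ⟨x, rfl⟩ := Ideal.Quotient.mk_surjective c
      obtain ⟨a, has, y, hy, hxa⟩ := hsrep x x.2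
      refine ⟨⟨a, has⟩, ?_⟩
      show res _ = res x
      apply (hres_eq _ _).mpr
      refine ⟨-y, neg_mem hy, ?_⟩
      push_cast
      linear_combination -hxa
  letI : Fintype (↥OF ⧸ Mi) := Fintype.ofBijective _ hmapbij
  have hcardk : Fintype.card (↥OF ⧸ Mi) = q := by
    rw [← Fintype.card_of_bijective hmapbij, Fintype.card_coe, hscard]
  haveI : Fact (Nat.Prime p) := ⟨hp⟩
  have hpk0 : ((p : ℕ) : ↥OF ⧸ Mi) = 0 := by
    have h1 : ((p : ℕ) : ↥OF ⧸ Mi) = res ((p : ℕ) : ↥OF) := (map_natCast res p).symm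
    rw [h1]
    have h2 : ((p : ℕ) : ↥OF) = ⟨(p : F), natCast_mem OF p⟩ := Subtype.ext (by push_cast; ring)
    rw [h2]
    exact hker_p _ _ ⟨1, one_mem OF, (mul_one _).symm⟩
  haveI : CharP (↥OF ⧸ Mi) p := (CharP.charP_iff_prime_eq_zero hp).2 hpk0
  have hpq : p ∣ q := by
    obtain ⟨nn, hprime, hnn⟩ := FiniteField.card (↥OF ⧸ Mi) p
    rw [← hcardk, hnn]
    exact dvd_pow_self p (by exact_mod_cast nn.ne_zero)
  have hq2 : 2 ≤ q := by
    rw [← hcardk]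
    exact Fintype.one_lt_card
  have hqk0 : ((q : ℕ) : ↥OF ⧸ Mi) = 0 := by
    rw [← hcardk]
    exact Nat.cast_card_eq_zero _
  have hq1k : ((q - 1 : ℕ) : ↥OF ⧸ Mi) ≠ 0 := by
    rw [Nat.cast_sub (by omega), hqk0, Nat.cast_one, zero_sub]
    exact neg_ne_zero.mpr one_ne_zero
  -- intersection of powers of p in O0 is zero
  have hzerocap : ∀ x : F, x ∈ O0 → (∀ n : ℕ, ∃ y ∈ O0, x = (p : F) ^ n * y) → x = 0 := by
    intro x hx hall
    by_contra hne
    obtain ⟨n, u, huO0, ⟨w, hwO0, huwveq⟩, hxeq⟩ := hO0dvr x hx hne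
    obtain ⟨y, hyO0, hyeq⟩ := hall (n + 1)
    rw [hxeq, pow_succ, mul_assoc] at hyeq
    have hu : u = (p : F) * y := by
      exact mul_left_cancel₀ (pow_ne_zero n hpF) hyeq
    apply hpinotunit
    refine ⟨pi ^ (e-1) * uu * y * w, ?_, ?_⟩
    · exact mul_mem (mul_mem (mul_mem (pow_mem hpimem _) huuOF) (hO0F hyO0)) (hO0F hwO0)
    · have : (p : F) * y * w = 1 := by rw [← hu]; exact huwveq
      calc pi * (pi ^ (e-1) * uu * y * w) = (pi ^ e * uu) * y * w := by rw [hpipow]; ring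
      _ = (p : F) * y * w := by rw [← hpeq]
      _ = 1 := this

  -- generator of the unit group of the residue field
  obtain ⟨g, hg⟩ := IsCyclic.exists_generator (α := (↥OF ⧸ Mi)ˣ)
  have hgord : orderOf g = q - 1 := by
    rw [orderOf_eq_card_of_forall_mem_zpowers hg, Nat.card_eq_fintype_card,
      Fintype.card_units, hcardk]
  have hgq : (g : ↥OF ⧸ Mi) ^ q = (g : ↥OF ⧸ Mi) := by
    have h1 : g ^ (q - 1) = 1 := by rw [← hgord]; exact pow_orderOf_eq_one g
    have h2 : (g : ↥OF ⧸ Mi) ^ (q - 1) = 1 := by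
      rw [← Units.val_pow_eq_pow_val, h1, Units.val_one]
    calc (g : ↥OF ⧸ Mi) ^ q = (g : ↥OF ⧸ Mi) ^ (q - 1) * g := by
          rw [← pow_succ]; congr 1; omega
    _ = g := by rw [h2, one_mul]
  -- a helper for res of powers
  have hres_pow : ∀ (x : F) (hx : x ∈ OF) (n : ℕ),
      res ⟨x ^ n, pow_mem hx n⟩ = (res ⟨x, hx⟩) ^ n := by
    intro x hx n
    rw [show (⟨x ^ n, pow_mem hx n⟩ : ↥OF) = (⟨x, hx⟩ : ↥OF) ^ n from
      Subtype.ext (by push_cast; ring), map_pow]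
  -- lift the generator to O0
  obtain ⟨x0, hx0⟩ := Ideal.Quotient.mk_surjective (g : ↥OF ⧸ Mi)
  obtain ⟨a0, ha0O0, y0, hy0, hxa0⟩ := hres_surj x0 x0.2
  have ha0OF : a0 ∈ OF := hO0F ha0O0
  have hres_a0 : res ⟨a0, ha0OF⟩ = (g : ↥OF ⧸ Mi) := by
    rw [← hx0]
    apply (hres_eq _ _).mpr
    exact ⟨-y0, neg_mem hy0, by push_cast; linear_combination -hxa0⟩
  -- Teichmueller construction
  obtain ⟨r, hr⟩ := hpq
  have hqrp : q = r * p := by rw [hr, Nat.mul_comm]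
  obtain ⟨yp, hypOF, hypeq⟩ := hppi
  have hstep0 : ∃ b ∈ O0, a0 ^ q - a0 = (p : F) * b := by
    apply hres_inj _ (sub_mem (pow_mem ha0O0 q) ha0O0)
    have h1 : res ⟨a0 ^ q - a0, sub_mem (pow_mem ha0OF q) ha0OF⟩ = 0 := by
      rw [show (⟨a0 ^ q - a0, sub_mem (pow_mem ha0OF q) ha0OF⟩ : ↥OF)
          = ⟨a0 ^ q, pow_mem ha0OF q⟩ - ⟨a0, ha0OF⟩ from Subtype.ext (by push_cast; ring),
        map_sub, hres_pow a0 ha0OF, hres_a0, hgq, sub_self]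
    obtain ⟨y, hy, hyeq⟩ := (hres_eq0 _).mp h1
    exact ⟨y, hy, hyeq⟩
  set A0 : ↥O0 := ⟨a0, ha0O0⟩ with hA0def
  have hd : ∀ n : ℕ, ((p : ↥O0)) ^ (n + 1) ∣ A0 ^ (q ^ (n + 1)) - A0 ^ (q ^ n) := by
    intro n
    induction n with
    | zero =>
      obtain ⟨b, hbO0, hbeq⟩ := hstep0
      refine (subring_dvd_iff O0 p 1 _ _).mpr ⟨b, hbO0, ?_⟩
      push_cast
      simp only [pow_one, pow_zero]
      exact hbeq
    | succ n ih =>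
      have h2 := key_pow p r q (n + 1) hqrp (by omega) _ _ ih
      rw [← pow_mul, ← pow_mul, ← pow_succ, ← pow_succ] at h2
      exact h2
  obtain ⟨L, hLO0, hLlim⟩ := hO0complete (fun n => a0 ^ (q ^ n)) (fun n => pow_mem ha0O0 _)
    (by
      intro n
      have h1 := dvd_trans (pow_dvd_pow ((p : ↥O0)) (Nat.le_succ n)) (hd n)
      obtain ⟨c, hcO0, hceq⟩ := (subring_dvd_iff O0 p n _ _).mp h1
      refine ⟨c, hcO0, ?_⟩
      push_cast at hceq
      exact hceq)
  have hLOF : L ∈ OF := hO0F hLO0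
  have hLlim' : ∀ n, ((p : ↥O0)) ^ n ∣ (⟨L, hLO0⟩ : ↥O0) - A0 ^ (q ^ n) := by
    intro n
    obtain ⟨y, hy, hyeq⟩ := hLlim n
    exact (subring_dvd_iff O0 p n _ _).mpr ⟨y, hy, by push_cast; exact hyeq⟩
  have hLq : L ^ q = L := by
    have key : ∀ n : ℕ, ∃ y ∈ O0, L ^ q - L = (p : F) ^ n * y := by
      intro n
      have h1 : ((p : ↥O0)) ^ n ∣ (⟨L, hLO0⟩ : ↥O0) ^ q - ⟨L, hLO0⟩ := by
        rcases Nat.eq_zero_or_pos n with h | h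
        · rw [h, pow_zero]; exact one_dvd _
        · have h2 := key_pow p r q n hqrp h _ _ (hLlim' n)
          rw [← pow_mul, ← pow_succ] at h2
          have h3 : ((p : ↥O0)) ^ (n + 1) ∣ A0 ^ (q ^ (n + 1)) - ⟨L, hLO0⟩ :=
            (dvd_sub_comm).mp (hLlim' (n + 1))
          have h4 := dvd_add h2 h3
          rw [sub_add_sub_cancel] at h4
          exact dvd_trans (pow_dvd_pow _ (Nat.le_succ n)) h4
      obtain ⟨c, hcO0, hceq⟩ := (subring_dvd_iff O0 p n _ _).mp h1
      exact ⟨c, hcO0, by push_cast at hceq; exact hceq⟩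
    have := hzerocap (L ^ q - L) (sub_mem (pow_mem hLO0 q) hLO0) key
    exact sub_eq_zero.mp this
  have hres_L : res ⟨L, hLOF⟩ = (g : ↥OF ⧸ Mi) := by
    obtain ⟨y, hy, hyeq⟩ := hLlim 1
    simp only [pow_one] at hyeq
    have h1 : res ⟨L, hLOF⟩ = res ⟨a0 ^ q, pow_mem ha0OF q⟩ := by
      apply (hres_eq _ _).mpr
      refine ⟨yp * y, mul_mem hypOF (hO0F hy), ?_⟩
      show L - a0 ^ q = pi * (yp * y)
      rw [hyeq, hypeq]
      ring
    refine h1.trans ((hres_pow a0 ha0OF q).trans ?_)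
    rw [hres_a0]
    exact hgq
  have hL0 : L ≠ 0 := by
    intro h
    apply Units.ne_zero g
    rw [← hres_L]
    have : (⟨L, hLOF⟩ : ↥OF) = 0 := Subtype.ext h
    rw [this, map_zero]
  have hLq1 : L ^ (q - 1) = 1 := by
    have h1 : L ^ (q - 1) * L = 1 * L := by
      rw [one_mul, ← pow_succ, show q - 1 + 1 = q from by omega]
      exact hLq
    exact mul_right_cancel₀ hL0 h1
  have horderL : ∀ j : ℕ, 0 < j → j < q - 1 → L ^ j ≠ 1 := by
    intro j hj1 hj2 hLj
    have h1 : (g : ↥OF ⧸ Mi) ^ j = 1 := by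
      have e1 : res ⟨L, hLOF⟩ ^ j = res ⟨L ^ j, pow_mem hLOF j⟩ := (hres_pow L hLOF j).symm
      have e2 : (⟨L ^ j, pow_mem hLOF j⟩ : ↥OF) = 1 := Subtype.ext (by simpa using hLj)
      rw [← hres_L, e1, e2, map_one]
    have h2 : g ^ j = 1 := Units.ext (by rw [Units.val_pow_eq_pow_val, h1, Units.val_one])
    have h3 := Nat.le_of_dvd hj1 (hgord ▸ orderOf_dvd_of_pow_eq_one h2)
    omega
  refine ⟨⟨L, hLO0, hLq1, horderL⟩, ?_⟩

  -- Part 2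
  intro z hzO0 hzq1 hzord m hm x hxRm hxunit
  have hzOF : z ∈ OF := hO0F hzO0
  have hz0 : z ≠ 0 := by
    intro h
    rw [h, zero_pow (by omega : q - 1 ≠ 0)] at hzq1
    exact zero_ne_one hzq1
  have hpim : pi ^ m = pi * pi ^ (m - 1) := by
    conv_lhs => rw [show m = (m-1)+1 from by omega]
    rw [pow_succ]
    ring
  set ζ : ↥OF ⧸ Mi := res ⟨z, hzOF⟩ with hζdef
  have hζq1 : ζ ^ (q - 1) = 1 := by
    rw [hζdef, ← hres_pow z hzOF (q-1)]
    have e2 : (⟨z ^ (q-1), pow_mem hzOF _⟩ : ↥OF) = 1 := Subtype.ext (by simpa using hzq1)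
    rw [e2, map_one]
  have hζ0 : ζ ≠ 0 := by
    intro h
    have h2 : (1 : ↥OF ⧸ Mi) = 0 := by rw [← hζq1, h, zero_pow (by omega : q - 1 ≠ 0)]
    exact one_ne_zero h2
  have hζord : ∀ j : ℕ, 0 < j → j < q - 1 → ζ ^ j ≠ 1 := by
    intro j hj1 hj2 hζj
    apply hzord j hj1 hj2
    have h1 : res ⟨z ^ j - 1, sub_mem (pow_mem hzOF j) (one_mem OF)⟩ = 0 := by
      have e1 : (⟨z ^ j - 1, sub_mem (pow_mem hzOF j) (one_mem OF)⟩ : ↥OF)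
          = ⟨z ^ j, pow_mem hzOF j⟩ - 1 := Subtype.ext (by push_cast; ring)
      rw [e1, map_sub, map_one, hres_pow z hzOF j, hζj, sub_self]
    obtain ⟨yy, hyy, hyyeq⟩ := (hres_eq0 _).mp h1
    obtain ⟨b, hbO0, hbeq⟩ := hres_inj (z ^ j - 1)
      (sub_mem (pow_mem hzO0 j) (one_mem O0)) ⟨yy, hyy, hyyeq⟩
    set W : ↥OF := ⟨z ^ j, pow_mem hzOF j⟩ with hWdef
    have hWq1 : W ^ (q - 1) = 1 := by
      apply Subtype.ext
      push_cast
      rw [← pow_mul, Nat.mul_comm j (q-1), pow_mul, hzq1, one_pow]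
    have hfac : (∑ i ∈ Finset.range (q-1), W ^ i) * (W - 1) = W ^ (q-1) - 1 :=
      geom_sum_mul W (q-1)
    rw [hWq1, sub_self] at hfac
    rcases mul_eq_zero.mp hfac with hS0 | hW1
    · exfalso
      have hresW : res W = 1 := by
        have h2 : res (W - 1) = 0 := by
          have e1 : W - 1 = (⟨z ^ j - 1, sub_mem (pow_mem hzOF j) (one_mem OF)⟩ : ↥OF) :=
            Subtype.ext (by push_cast; ring)
          rw [e1]
          exact hker_p _ _ ⟨b, hO0F hbO0, hbeq⟩
        rw [map_sub, map_one, sub_eq_zero] at h2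
        exact h2
      have hsum : res (∑ i ∈ Finset.range (q-1), W ^ i) = ((q-1 : ℕ) : ↥OF ⧸ Mi) := by
        rw [map_sum]
        rw [Finset.sum_congr rfl (fun i _ => by rw [map_pow, hresW, one_pow]),
          Finset.sum_const, Finset.card_range, nsmul_eq_mul, mul_one]
      rw [hS0, map_zero] at hsum
      exact hq1k hsum.symm
    · have hW1' : W = 1 := sub_eq_zero.mp hW1
      exact congrArg Subtype.val hW1'
  set ζu : (↥OF ⧸ Mi)ˣ := Units.mk0 ζ hζ0 with hζudef
  have hζuval : (ζu : ↥OF ⧸ Mi) = ζ := rfl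
  have hζuord : orderOf ζu = q - 1 := by
    apply (orderOf_eq_iff (by omega)).mpr
    constructor
    · apply Units.ext
      rw [Units.val_pow_eq_pow_val, hζuval, Units.val_one, hζq1]
    · intro mm hmm1 hmm2 hc
      apply hζord mm hmm2 hmm1
      have h2 := congrArg Units.val hc
      rw [Units.val_pow_eq_pow_val, hζuval, Units.val_one] at h2
      exact h2
  have henum : Function.Bijective (fun i : Fin (q-1) => ζu ^ (i : ℕ)) := by
    rw [Fintype.bijective_iff_injective_and_card]
    constructor
    · intro i j hij
      exact Fin.ext (pow_injOn_Iio_orderOf (x := ζu)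
        (by rw [hζuord]; exact i.2) (by rw [hζuord]; exact j.2) hij)
    · rw [Fintype.card_fin, Fintype.card_units, hcardk]
  obtain ⟨aR, haRO0, bR, hbROF, hxeq⟩ := hxRm
  obtain ⟨w, hwRm, hxw⟩ := hxunit
  obtain ⟨aw, hawO0, bw, hbwOF, hweq⟩ := hwRm
  have hxOF : x ∈ OF := by
    rw [hxeq]; exact add_mem (hO0F haRO0) (mul_mem (pow_mem hpimem m) hbROF)
  have hwOF : w ∈ OF := by
    rw [hweq]; exact add_mem (hO0F hawO0) (mul_mem (pow_mem hpimem m) hbwOF)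
  have hresx0 : res ⟨x, hxOF⟩ ≠ 0 := by
    intro h
    obtain ⟨y, hy, hyeq⟩ := (hres_eq0 _).mp h
    exact hpinotunit ⟨y * w, mul_mem hy hwOF, by rw [← mul_assoc, ← hyeq]; exact hxw⟩
  obtain ⟨i, hi⟩ := henum.surjective (Units.mk0 (res ⟨x, hxOF⟩) hresx0)
  have hilt : (i : ℕ) < q - 1 := i.2
  have hii : ζ ^ (i : ℕ) = res ⟨x, hxOF⟩ := by
    have h2 := congrArg Units.val hi
    rw [Units.val_pow_eq_pow_val, hζuval] at h2
    simpa using h2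
  set ni : ℕ := q - 1 - (i : ℕ) with hnidef
  have hzi_c : z ^ (i : ℕ) * z ^ ni = 1 := by
    rw [← pow_add, show (i:ℕ) + ni = q - 1 from by omega, hzq1]
  have hxdecomp : x = z ^ (i : ℕ) * (x * z ^ ni) := by
    calc x = x * (z ^ (i:ℕ) * z ^ ni) := by rw [hzi_c, mul_one]
    _ = z ^ (i:ℕ) * (x * z ^ ni) := by ring
  have huOF : x * z ^ ni ∈ OF := mul_mem hxOF (pow_mem hzOF ni)
  have hresu : res ⟨x * z ^ ni, huOF⟩ = 1 := by
    have e1 : (⟨x * z ^ ni, huOF⟩ : ↥OF) = ⟨x, hxOF⟩ * ⟨z ^ ni, pow_mem hzOF ni⟩ :=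
      Subtype.ext rfl
    rw [e1, map_mul, hres_pow z hzOF ni, ← hii, ← pow_add,
      show (i:ℕ) + ni = q - 1 from by omega, hζq1]
  have humem : x * z ^ ni ∈ onePlusSet (mTildeSet p O0 OF pi m) := by
    obtain ⟨yu, hyuOF, hyueq⟩ : ∃ y ∈ OF, x * z ^ ni - 1 = pi * y := by
      apply (hres_eq0 (⟨x * z ^ ni - 1, sub_mem huOF (one_mem OF)⟩ : ↥OF)).mp
      have e1 : (⟨x * z ^ ni - 1, sub_mem huOF (one_mem OF)⟩ : ↥OF)
          = ⟨x * z ^ ni, huOF⟩ - 1 := Subtype.ext (by push_cast; ring)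
      rw [e1, map_sub, map_one, hresu, sub_self]
    have hu2 : x * z ^ ni = aR * z ^ ni + pi ^ m * (bR * z ^ ni) := by rw [hxeq]; ring
    have ha'O0 : aR * z ^ ni ∈ O0 := mul_mem haRO0 (pow_mem hzO0 ni)
    have hb'OF : bR * z ^ ni ∈ OF := mul_mem hbROF (pow_mem hzOF ni)
    obtain ⟨c0, hc0O0, hc0eq⟩ : ∃ b ∈ O0, aR * z ^ ni - 1 = (p : F) * b := by
      apply hres_inj _ (sub_mem ha'O0 (one_mem O0))
      refine ⟨yu - pi ^ (m-1) * (bR * z ^ ni), sub_mem hyuOF (mul_mem (pow_mem hpimem _) hb'OF), ?_⟩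
      have : aR * z ^ ni - 1 = (x * z ^ ni - 1) - pi ^ m * (bR * z ^ ni) := by
        rw [hu2]; ring
      rw [this, hyueq, hpim]
      ring
    simp only [onePlusSet, mTildeSet, Set.mem_setOf_eq]
    refine ⟨c0, hc0O0, bR * z ^ ni, hb'OF, ?_⟩
    rw [show x * z ^ ni - 1 = (aR * z ^ ni - 1) + pi ^ m * (bR * z ^ ni) from by rw [hu2]; ring,
      hc0eq]
  refine ⟨((i : ℕ), x * z ^ ni), ⟨hilt, humem, hxdecomp⟩, ?_⟩
  rintro ⟨j, v⟩ ⟨hj, hv, hxv⟩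
  simp only [onePlusSet, mTildeSet, Set.mem_setOf_eq] at hv
  obtain ⟨av, havO0, bv, hbvOF, hveq⟩ := hv
  have hvOF : v ∈ OF := by
    rw [show v = 1 + ((p:F) * av + pi ^ m * bv) from by rw [← hveq]; ring]
    exact add_mem (one_mem OF)
      (add_mem (mul_mem (natCast_mem OF p) (hO0F havO0)) (mul_mem (pow_mem hpimem m) hbvOF))
  have hresv : res ⟨v, hvOF⟩ = 1 := by
    have h2 : res (⟨v, hvOF⟩ - 1) = 0 := by
      have e1 : (⟨v, hvOF⟩ - 1 : ↥OF) = ⟨v - 1, sub_mem hvOF (one_mem OF)⟩ :=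
        Subtype.ext (by push_cast; ring)
      rw [e1]
      apply (hres_eq0 _).mpr
      refine ⟨yp * av + pi ^ (m-1) * bv,
        add_mem (mul_mem hypOF (hO0F havO0)) (mul_mem (pow_mem hpimem _) hbvOF), ?_⟩
      show v - 1 = pi * (yp * av + pi ^ (m-1) * bv)
      rw [hveq, hypeq, hpim]
      ring
    rw [map_sub, map_one, sub_eq_zero] at h2
    exact h2
  have hresxv : res ⟨x, hxOF⟩ = ζ ^ j := by
    have e1 : (⟨x, hxOF⟩ : ↥OF) = ⟨z ^ j, pow_mem hzOF j⟩ * ⟨v, hvOF⟩ :=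
      Subtype.ext (by push_cast; exact hxv)
    rw [e1, map_mul, hres_pow z hzOF j, hresv, mul_one]
  have hju : ζu ^ j = ζu ^ (i : ℕ) := by
    apply Units.ext
    rw [Units.val_pow_eq_pow_val, Units.val_pow_eq_pow_val, hζuval, hii, hresxv]
  have hj_eq : j = (i : ℕ) := by
    have h2 := henum.injective (a₁ := ⟨j, hj⟩) (a₂ := i) (by simpa using hju)
    exact congrArg Fin.val h2
  have hv_eq : v = x * z ^ ni := by
    apply mul_left_cancel₀ (pow_ne_zero (i:ℕ) hz0)
    rw [← hxdecomp, hxv, hj_eq]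
  exact Prod.ext hj_eq hv_eq
end

section
/- Let m ≥ 1 be an integer, u ∈ 1 + 𝔪̃_m, and α ∈ ℤ_p. Then for every sequence (a_n) of natural numbers converging to α in ℤ_p, the sequence (u^{a_n}) converges in F, its limit lies in 1 + 𝔪̃_m, and this limit depends only on α and not on the chosen sequence (a_n). Consequently, setting u^α equal to this limit makes 1 + 𝔪̃_m into a ℤ_p-module under exponentiation. -/
theorem stmt_7
    (p : ℕ) [hp : Fact (Nat.Prime p)]
    (F : Type) [NormedField F] [CompleteSpace F]
    -- the norm of `F` is nonarchimedean (an ultrametric absolute value):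
    (hultra : ∀ x y : F, ‖x + y‖ ≤ max ‖x‖ ‖y‖)
    (OF O0 : Subring F) (hO0F : O0 ≤ OF)
    -- `𝒪_F` is the ring of integers of `F`, i.e. its closed unit ball:
    (hOF : ∀ x : F, x ∈ OF ↔ ‖x‖ ≤ 1)
    (pi : F) (hpimem : pi ∈ OF) (hpi0 : pi ≠ 0) (hpilt : ‖pi‖ < 1)
    -- `𝔪 = π 𝒪_F` is the maximal ideal of `𝒪_F`:
    (hmax : ∀ x ∈ OF, (¬ ∃ y ∈ OF, x = pi * y) → ∃ z ∈ OF, x * z = 1)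
    -- the norm extends the `p`-adic absolute value:
    (hpnorm : ‖(p : F)‖ = (p : ℝ)⁻¹)
    -- the absolute ramification index `e`, i.e. `p 𝒪_F = 𝔪^e`:
    (e : ℕ) (he : 1 ≤ e)
    (hram : ∃ u ∈ OF, (∃ w ∈ OF, u * w = 1) ∧ (p : F) = pi ^ e * u)
    -- `𝒪_0` is a complete discrete valuation ring with maximal ideal `p 𝒪_0`,
    -- closed in `F`:
    (hO0dvr : ∀ x ∈ O0, x ≠ (0 : F) →
      ∃ n : ℕ, ∃ u ∈ O0, (∃ w ∈ O0, u * w = 1) ∧ x = (p : F) ^ n * u)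
    (hO0closed : IsClosed (O0 : Set F))
    -- `𝒪_F` is a finitely generated `𝒪_0`-module:
    (hfg : ∃ s : Finset F, (↑s : Set F) ⊆ (OF : Set F) ∧
      ∀ x ∈ OF, ∃ c : F → F, (∀ i ∈ s, c i ∈ O0) ∧ x = ∑ i ∈ s, c i * i)
    -- the inclusion `𝒪_0 ⊆ 𝒪_F` induces an isomorphism of residue fields:
    (hres_surj : ∀ x ∈ OF, ∃ a ∈ O0, ∃ y ∈ OF, x - a = pi * y)
    (hres_inj : ∀ a ∈ O0, (∃ y ∈ OF, a = pi * y) → ∃ b ∈ O0, a = (p : F) * b)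
    -- the residue field is finite of cardinality `q`:
    (q : ℕ)
    (hq : ∃ s : Finset F, s.card = q ∧ (↑s : Set F) ⊆ (OF : Set F) ∧
      (∀ x ∈ OF, ∃ a ∈ s, ∃ y ∈ OF, x - a = pi * y) ∧
      (∀ a ∈ s, ∀ b ∈ s, (∃ y ∈ OF, a - b = pi * y) → a = b))
    (m : ℕ) (hm : 1 ≤ m)
    (u : F) (hu : u ∈ onePlusSet (mTildeSet p O0 OF pi m)) (al : ℤ_[p]) :
    -- there is a limit `L ∈ 1 + 𝔪̃_m`, independent of the chosen sequence, such that
    -- `u ^ (a n) → L` for every sequence of naturals `a` converging to `α` in `ℤ_p`: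
    (∃ L ∈ onePlusSet (mTildeSet p O0 OF pi m),
      ∀ a : ℕ → ℕ, Filter.Tendsto (fun n => ((a n : ℤ_[p]))) Filter.atTop (nhds al) →
        Filter.Tendsto (fun n => u ^ a n) Filter.atTop (nhds L)) ∧
    -- consequently, this exponentiation makes `1 + 𝔪̃_m` a `ℤ_p`-module:
    (∃ f : F → ℤ_[p] → F,
      (∀ v ∈ onePlusSet (mTildeSet p O0 OF pi m), ∀ b : ℤ_[p],
        f v b ∈ onePlusSet (mTildeSet p O0 OF pi m)) ∧
      (∀ v ∈ onePlusSet (mTildeSet p O0 OF pi m), ∀ b : ℤ_[p], ∀ a : ℕ → ℕ,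
        Filter.Tendsto (fun n => ((a n : ℤ_[p]))) Filter.atTop (nhds b) →
        Filter.Tendsto (fun n => v ^ a n) Filter.atTop (nhds (f v b))) ∧
      (∀ v ∈ onePlusSet (mTildeSet p O0 OF pi m), ∀ b c : ℤ_[p],
        f v (b + c) = f v b * f v c) ∧
      (∀ v ∈ onePlusSet (mTildeSet p O0 OF pi m),
        ∀ w ∈ onePlusSet (mTildeSet p O0 OF pi m), ∀ b : ℤ_[p],
        f (v * w) b = f v b * f w b) ∧
      (∀ v ∈ onePlusSet (mTildeSet p O0 OF pi m), ∀ b c : ℤ_[p],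
        f v (b * c) = f (f v b) c) ∧
      (∀ v ∈ onePlusSet (mTildeSet p O0 OF pi m), f v 1 = v)) := by
  classical
  set S : Set F := mTildeSet p O0 OF pi m with hSdef
  set T : Set F := onePlusSet S with hTdef
  have hp2 : 2 ≤ p := hp.out.two_le
  have hp1R : (1:ℝ) < p := by exact_mod_cast Nat.lt_of_lt_of_le one_lt_two hp2
  have hp0R : (0:ℝ) < p := lt_trans one_pos hp1R
  have hpinv1 : ((p:ℝ))⁻¹ < 1 := inv_lt_one_of_one_lt₀ hp1R
  have hpinv0 : (0:ℝ) < ((p:ℝ))⁻¹ := inv_pos.mpr hp0R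
  have hpin0 : (0:ℝ) < ‖pi‖ := norm_pos_iff.mpr hpi0
  set c : ℝ := max ((p:ℝ)⁻¹) (‖pi‖ ^ m) with hcdef
  have hc0 : 0 < c := lt_max_of_lt_left hpinv0
  have hc1 : c < 1 := max_lt hpinv1 (pow_lt_one₀ (norm_nonneg pi) hpilt (by omega))
  have hOFnorm : ∀ x ∈ OF, ‖x‖ ≤ 1 := fun x hx => (hOF x).1 hx
  -- basic properties of S
  have hS0 : (0:F) ∈ S := ⟨0, zero_mem _, 0, zero_mem _, by ring⟩
  have hSadd : ∀ x ∈ S, ∀ y ∈ S, x + y ∈ S := by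
    rintro x ⟨a, ha, b, hb, rfl⟩ y ⟨a', ha', b', hb', rfl⟩
    exact ⟨a + a', add_mem ha ha', b + b', add_mem hb hb', by ring⟩
  have hSmul : ∀ x ∈ S, ∀ y ∈ S, x * y ∈ S := by
    rintro x ⟨a, ha, b, hb, rfl⟩ y ⟨a', ha', b', hb', rfl⟩
    refine ⟨(p:F) * a * a', mul_mem (mul_mem (natCast_mem O0 p) ha) ha',
      (p:F) * a * b' + (p:F) * b * a' + pi ^ m * b * b', ?_, by ring⟩
    exact add_mem (add_mem (mul_mem (mul_mem (natCast_mem OF p) (hO0F ha)) hb')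
      (mul_mem (mul_mem (natCast_mem OF p) hb) (hO0F ha')))
      (mul_mem (mul_mem (pow_mem hpimem m) hb) hb')
  have hSnorm : ∀ x ∈ S, ‖x‖ ≤ c := by
    rintro x ⟨a, ha, b, hb, rfl⟩
    refine le_trans (hultra _ _) (max_le ?_ ?_)
    · calc ‖(p:F) * a‖ = (p:ℝ)⁻¹ * ‖a‖ := by rw [norm_mul, hpnorm]
        _ ≤ (p:ℝ)⁻¹ * 1 := by
            exact mul_le_mul_of_nonneg_left (hOFnorm a (hO0F ha)) hpinv0.le
        _ ≤ c := by rw [mul_one]; exact le_max_left _ _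
    · calc ‖pi ^ m * b‖ = ‖pi‖ ^ m * ‖b‖ := by rw [norm_mul, norm_pow]
        _ ≤ ‖pi‖ ^ m * 1 := by
            exact mul_le_mul_of_nonneg_left (hOFnorm b hb) (by positivity)
        _ ≤ c := by rw [mul_one]; exact le_max_right _ _
  -- basic properties of T
  have h1T : (1:F) ∈ T := by show (1:F) - 1 ∈ S; rw [sub_self]; exact hS0
  have hTmul : ∀ v ∈ T, ∀ w ∈ T, v * w ∈ T := by
    intro v hv w hw
    have hv' : v - 1 ∈ S := hv
    have hw' : w - 1 ∈ S := hw
    show v * w - 1 ∈ S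
    have : v * w - 1 = (v - 1) * (w - 1) + ((v - 1) + (w - 1)) := by ring
    rw [this]
    exact hSadd _ (hSmul _ hv' _ hw') _ (hSadd _ hv' _ hw')
  have hTpow : ∀ v ∈ T, ∀ n : ℕ, v ^ n ∈ T := by
    intro v hv n
    induction n with
    | zero => simpa using h1T
    | succ k ih => rw [pow_succ]; exact hTmul _ ih _ hv
  have hTnorm : ∀ v ∈ T, ‖v‖ ≤ 1 := by
    intro v hv
    have hv' : v - 1 ∈ S := hv
    calc ‖v‖ = ‖(v - 1) + 1‖ := by ring_nf
      _ ≤ max ‖v - 1‖ ‖(1:F)‖ := hultra _ _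
      _ ≤ 1 := max_le (le_trans (hSnorm _ hv') hc1.le) (by simp)
  have hTnorm1 : ∀ v ∈ T, ‖v - 1‖ ≤ c := fun v hv => hSnorm _ hv
  -- Lipschitz property of powers
  have hLip : ∀ v ∈ T, ∀ w ∈ T, ∀ t : ℕ, ‖v ^ t - w ^ t‖ ≤ ‖v - w‖ := by
    intro v hv w hw t
    induction t with
    | zero => simp
    | succ k ih =>
      have key : v ^ (k+1) - w ^ (k+1) = v ^ k * (v - w) + (v ^ k - w ^ k) * w := by ring
      rw [key]
      refine le_trans (hultra _ _) (max_le ?_ ?_)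
      · rw [norm_mul]
        exact mul_le_of_le_one_left (norm_nonneg _) (hTnorm _ (hTpow v hv k))
      · rw [norm_mul]
        calc ‖v ^ k - w ^ k‖ * ‖w‖ ≤ ‖v ^ k - w ^ k‖ * 1 :=
            mul_le_mul_of_nonneg_left (hTnorm w hw) (norm_nonneg _)
          _ ≤ ‖v - w‖ := by rw [mul_one]; exact ih
  -- ultrametric bound for finite sums
  have hsum : ∀ (n : ℕ) (g : ℕ → F) (C : ℝ), 0 ≤ C → (∀ i < n, ‖g i‖ ≤ C) →
      ‖∑ i ∈ Finset.range n, g i‖ ≤ C := by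
    intro n g C hC hg
    induction n with
    | zero => simpa using hC
    | succ k ih =>
      rw [Finset.sum_range_succ]
      refine le_trans (hultra _ _) (max_le ?_ (hg k (by omega)))
      exact ih (fun i hi => hg i (by omega))
  have hnat1 : ∀ n : ℕ, ‖(n:F)‖ ≤ 1 := by
    intro n
    induction n with
    | zero => simp
    | succ k ih =>
      push_cast
      exact le_trans (hultra _ _) (max_le ih (by simp))
  -- the key contraction: p-th powers
  have hPowp : ∀ v ∈ T, ‖v ^ p - 1‖ ≤ c * ‖v - 1‖ := by
    intro v hv
    set x : F := v - 1 with hxdef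
    have hx : x ∈ S := hv
    have hxc : ‖x‖ ≤ c := hSnorm _ hx
    have hx1 : ‖x‖ ≤ 1 := hxc.trans hc1.le
    have key : v ^ p - 1 = ∑ k ∈ Finset.range p, x ^ (k+1) * (p.choose (k+1) : F) := by
      have hv' : v = x + 1 := by rw [hxdef]; ring
      rw [hv', add_pow]
      rw [Finset.sum_range_succ']
      simp [one_pow]
    rw [key]
    refine hsum p _ (c * ‖x‖) (by positivity) ?_
    intro k hk
    rw [norm_mul, norm_pow]
    rcases Nat.eq_zero_or_pos k with hk0 | hk1
    · subst hk0
      rw [pow_one, Nat.choose_one_right, hpnorm]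
      calc ‖x‖ * (p:ℝ)⁻¹ ≤ ‖x‖ * c := by
            exact mul_le_mul_of_nonneg_left (le_max_left _ _) (norm_nonneg _)
        _ = c * ‖x‖ := mul_comm _ _
    · calc ‖x‖ ^ (k+1) * ‖((p.choose (k+1) : ℕ) : F)‖ ≤ ‖x‖ ^ (k+1) * 1 :=
          mul_le_mul_of_nonneg_left (hnat1 _) (by positivity)
        _ = ‖x‖ ^ k * ‖x‖ := by rw [mul_one, pow_succ]
        _ ≤ c * ‖x‖ := by
            refine mul_le_mul_of_nonneg_right ?_ (norm_nonneg _)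
            calc ‖x‖ ^ k ≤ ‖x‖ ^ 1 := pow_le_pow_of_le_one (norm_nonneg _) hx1 hk1
              _ = ‖x‖ := pow_one _
              _ ≤ c := hxc
  -- iterate: p^k-th powers
  have hPowpk : ∀ v ∈ T, ∀ k : ℕ, ‖v ^ (p ^ k) - 1‖ ≤ c ^ k * ‖v - 1‖ := by
    intro v hv k
    induction k with
    | zero => simp
    | succ j ih =>
      have h1 : v ^ (p ^ (j+1)) = (v ^ (p ^ j)) ^ p := by
        rw [← pow_mul, pow_succ]
      rw [h1]
      calc ‖(v ^ (p ^ j)) ^ p - 1‖ ≤ c * ‖v ^ (p ^ j) - 1‖ := hPowp _ (hTpow v hv _)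
        _ ≤ c * (c ^ j * ‖v - 1‖) := mul_le_mul_of_nonneg_left ih hc0.le
        _ = c ^ (j+1) * ‖v - 1‖ := by ring
  -- main estimate, ordered version
  have hA0 : ∀ v ∈ T, ∀ (k a b : ℕ), b ≤ a → p ^ k ∣ (a - b) → ‖v ^ a - v ^ b‖ ≤ c ^ k := by
    intro v hv k a b hba ⟨t, ht⟩
    have ha : a = b + p ^ k * t := by omega
    subst ha
    have key : v ^ (b + p ^ k * t) - v ^ b = v ^ b * ((v ^ (p ^ k)) ^ t - 1 ^ t) := by
      rw [pow_add, pow_mul, one_pow]; ring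
    rw [key, norm_mul]
    calc ‖v ^ b‖ * ‖(v ^ (p ^ k)) ^ t - 1 ^ t‖ ≤ 1 * ‖(v ^ (p ^ k)) ^ t - 1 ^ t‖ :=
        mul_le_mul_of_nonneg_right (hTnorm _ (hTpow v hv b)) (norm_nonneg _)
      _ = ‖(v ^ (p ^ k)) ^ t - 1 ^ t‖ := one_mul _
      _ ≤ ‖v ^ (p ^ k) - 1‖ := hLip _ (hTpow v hv _) _ h1T t
      _ ≤ c ^ k * ‖v - 1‖ := hPowpk v hv k
      _ ≤ c ^ k * 1 := mul_le_mul_of_nonneg_left ((hTnorm1 v hv).trans hc1.le) (by positivity)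
      _ = c ^ k := mul_one _
  -- main estimate, via p-adic norms
  have hA : ∀ v ∈ T, ∀ (k a b : ℕ),
      ‖((a : ℤ_[p]) - (b : ℤ_[p]))‖ ≤ (p:ℝ) ^ (-(k:ℤ)) → ‖v ^ a - v ^ b‖ ≤ c ^ k := by
    intro v hv k a b hnorm
    have hcast : ((a : ℤ_[p]) - (b : ℤ_[p])) = (((a:ℤ) - (b:ℤ) : ℤ) : ℤ_[p]) := by push_cast; ring
    rw [hcast] at hnorm
    have hdvd : ((p:ℤ) ^ k) ∣ ((a:ℤ) - (b:ℤ)) := PadicInt.norm_int_le_pow_iff_dvd.mp hnorm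
    rcases le_total b a with hba | hab
    · refine hA0 v hv k a b hba ?_
      have : ((p ^ k : ℕ) : ℤ) ∣ (((a - b : ℕ)) : ℤ) := by
        push_cast [Nat.cast_sub hba]
        exact_mod_cast hdvd
      exact_mod_cast this
    · rw [norm_sub_rev]
      refine hA0 v hv k b a hab ?_
      have : ((p ^ k : ℕ) : ℤ) ∣ (((b - a : ℕ)) : ℤ) := by
        have h2 : ((p:ℤ) ^ k) ∣ ((b:ℤ) - (a:ℤ)) := by
          have := dvd_neg.mpr hdvd; rwa [neg_sub] at this
        push_cast [Nat.cast_sub hab]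
        exact_mod_cast h2
      exact_mod_cast this
  -- approximation sequence facts
  have happr_norm : ∀ (b : ℤ_[p]) (n : ℕ), ‖b - (b.appr n : ℤ_[p])‖ ≤ (p:ℝ) ^ (-(n:ℤ)) :=
    fun b n => (PadicInt.norm_le_pow_iff_mem_span_pow _ n).mpr (PadicInt.appr_spec n b)
  have hzpow_eq : ∀ n : ℕ, (p:ℝ) ^ (-(n:ℤ)) = ((p:ℝ)⁻¹) ^ n := by
    intro n; rw [zpow_neg, zpow_natCast, inv_pow]
  have happr : ∀ b : ℤ_[p],
      Filter.Tendsto (fun n => ((b.appr n : ℤ_[p]))) Filter.atTop (nhds b) := by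
    intro b
    rw [tendsto_iff_norm_sub_tendsto_zero]
    refine squeeze_zero (g := fun n => ((p:ℝ)⁻¹) ^ n) (fun n => norm_nonneg _) (fun n => ?_) ?_
    · show ‖(b.appr n : ℤ_[p]) - b‖ ≤ ((p:ℝ)⁻¹) ^ n
      rw [norm_sub_rev, ← hzpow_eq n]
      exact happr_norm b n
    · exact tendsto_pow_atTop_nhds_zero_of_lt_one hpinv0.le hpinv1
  have hck : Filter.Tendsto (fun k : ℕ => c ^ k) Filter.atTop (nhds 0) :=
    tendsto_pow_atTop_nhds_zero_of_lt_one hc0.le hc1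
  -- the limit function
  set f : F → ℤ_[p] → F := fun v b => Filter.limUnder Filter.atTop (fun n => v ^ (b.appr n)) with hfdef
  -- main convergence lemma
  have hconv : ∀ v ∈ T, ∀ b : ℤ_[p], ∀ a : ℕ → ℕ,
      Filter.Tendsto (fun n => ((a n : ℤ_[p]))) Filter.atTop (nhds b) →
      Filter.Tendsto (fun n => v ^ a n) Filter.atTop (nhds (f v b)) := by
    intro v hv b a ha
    -- the canonical sequence is Cauchy
    have hcauchy : CauchySeq (fun n => v ^ (b.appr n)) := by
      rw [Metric.cauchySeq_iff']
      intro ε hε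
      obtain ⟨k, hk⟩ : ∃ k : ℕ, c ^ k < ε := by
        rcases (hck.eventually (gt_mem_nhds hε)).exists with ⟨k, hk⟩
        exact ⟨k, hk⟩
      refine ⟨k, fun n hn => ?_⟩
      rw [dist_eq_norm]
      refine lt_of_le_of_lt (hA v hv k (b.appr n) (b.appr k) ?_) hk
      have h1 : ((b.appr n : ℤ_[p])) - (b.appr k : ℤ_[p]) =
          (b - (b.appr k : ℤ_[p])) + (-(b - (b.appr n : ℤ_[p]))) := by ring
      rw [h1]
      refine le_trans (PadicInt.nonarchimedean _ _) (max_le (happr_norm b k) ?_)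
      rw [norm_neg]
      refine le_trans (happr_norm b n) ?_
      apply zpow_le_zpow_right₀ hp1R.le
      omega
    obtain ⟨L, hL⟩ := cauchySeq_tendsto_of_complete hcauchy
    have hwlim : Filter.Tendsto (fun n => v ^ (b.appr n)) Filter.atTop (nhds (f v b)) :=
      tendsto_nhds_limUnder ⟨L, hL⟩
    -- the difference tends to zero
    have hdiff0 : Filter.Tendsto (fun n => ((a n : ℤ_[p])) - (b.appr n : ℤ_[p]))
        Filter.atTop (nhds 0) := by
      simpa using ha.sub (happr b)
    have hd : Filter.Tendsto (fun n => v ^ a n - v ^ (b.appr n)) Filter.atTop (nhds 0) := by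
      rw [NormedAddCommGroup.tendsto_nhds_zero]
      intro ε hε
      obtain ⟨k, hk⟩ : ∃ k : ℕ, c ^ k < ε := by
        rcases (hck.eventually (gt_mem_nhds hε)).exists with ⟨k, hk⟩
        exact ⟨k, hk⟩
      have hpos : (0:ℝ) < (p:ℝ) ^ (-(k:ℤ)) := by
        rw [hzpow_eq]; positivity
      have hev := hdiff0 (Metric.closedBall_mem_nhds (0:ℤ_[p]) hpos)
      rw [Filter.mem_map] at hev
      filter_upwards [hev] with n hn
      rw [Set.mem_preimage, Metric.mem_closedBall, dist_zero_right] at hn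
      exact lt_of_le_of_lt (hA v hv k (a n) (b.appr n) hn) hk
    have := hd.add hwlim
    simpa using this
  -- closedness of S and T
  have hSclosed : IsClosed S := by
    refine isClosed_of_closure_subset ?_
    intro x hx
    have hεpos : (0:ℝ) < ‖pi‖ ^ m := by positivity
    obtain ⟨y, hyS, hxy⟩ := Metric.mem_closure_iff.mp hx (‖pi‖ ^ m) hεpos
    obtain ⟨a, ha, bb, hbb, hy⟩ := hyS
    have hpim0 : pi ^ m ≠ 0 := pow_ne_zero m hpi0
    refine ⟨a, ha, bb + (x - y) / pi ^ m, ?_, ?_⟩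
    · refine add_mem hbb ((hOF _).mpr ?_)
      rw [norm_div, norm_pow]
      rw [div_le_one hεpos]
      rw [dist_eq_norm] at hxy
      exact hxy.le
    · have hcan : pi ^ m * ((x - y) / pi ^ m) = x - y := mul_div_cancel₀ _ hpim0
      rw [mul_add, hcan]
      linear_combination hy
  have hTclosed : IsClosed T := by
    have : T = (fun x : F => x - 1) ⁻¹' S := rfl
    rw [this]
    exact hSclosed.preimage (continuous_id.sub continuous_const)
  have hmemT : ∀ v ∈ T, ∀ b : ℤ_[p], f v b ∈ T := by
    intro v hv b
    exact hTclosed.mem_of_tendsto (hconv v hv b b.appr (happr b))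
      (Filter.Eventually.of_forall fun n => hTpow v hv _)
  -- module laws
  have hadd : ∀ v ∈ T, ∀ b d : ℤ_[p], f v (b + d) = f v b * f v d := by
    intro v hv b d
    have h1 := hconv v hv (b + d) (fun n => b.appr n + d.appr n)
      (by
        have := (happr b).add (happr d)
        simpa [Nat.cast_add] using this)
    have h2 : Filter.Tendsto (fun n => v ^ (b.appr n + d.appr n)) Filter.atTop
        (nhds (f v b * f v d)) := by
      have := (hconv v hv b b.appr (happr b)).mul (hconv v hv d d.appr (happr d))
      simpa [pow_add] using this
    exact tendsto_nhds_unique h1 h2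
  have hmulb : ∀ v ∈ T, ∀ w ∈ T, ∀ b : ℤ_[p], f (v * w) b = f v b * f w b := by
    intro v hv w hw b
    have h1 := hconv (v * w) (hTmul v hv w hw) b b.appr (happr b)
    have h2 : Filter.Tendsto (fun n => (v * w) ^ (b.appr n)) Filter.atTop
        (nhds (f v b * f w b)) := by
      have := (hconv v hv b b.appr (happr b)).mul (hconv w hw b b.appr (happr b))
      simpa [mul_pow] using this
    exact tendsto_nhds_unique h1 h2
  have hcomp : ∀ v ∈ T, ∀ b d : ℤ_[p], f v (b * d) = f (f v b) d := by
    intro v hv b d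
    set V : F := f v b with hVdef
    have hV : V ∈ T := hmemT v hv b
    have h1 := hconv v hv (b * d) (fun n => b.appr n * d.appr n)
      (by
        have := (happr b).mul (happr d)
        simpa [Nat.cast_mul] using this)
    have hVc := hconv V hV d d.appr (happr d)
    have hvV : Filter.Tendsto (fun n => ‖v ^ (b.appr n) - V‖) Filter.atTop (nhds 0) :=
      tendsto_iff_norm_sub_tendsto_zero.mp (hconv v hv b b.appr (happr b))
    have hd0 : Filter.Tendsto (fun n => (v ^ (b.appr n)) ^ (d.appr n) - V ^ (d.appr n))
        Filter.atTop (nhds 0) := by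
      refine squeeze_zero_norm (fun n => ?_) hvV
      exact hLip _ (hTpow v hv _) _ hV (d.appr n)
    have h2 : Filter.Tendsto (fun n => v ^ (b.appr n * d.appr n)) Filter.atTop
        (nhds (f V d)) := by
      have := hd0.add hVc
      rw [zero_add] at this
      have heq : (fun n => ((v ^ (b.appr n)) ^ (d.appr n) - V ^ (d.appr n)) + V ^ (d.appr n)) =
          fun n => v ^ (b.appr n * d.appr n) := by
        funext n; rw [pow_mul]; ring
      rwa [heq] at this
    exact tendsto_nhds_unique h1 h2
  have hone : ∀ v ∈ T, f v 1 = v := by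
    intro v hv
    have h1 := hconv v hv 1 (fun _ => 1)
      (by simpa using (tendsto_const_nhds :
        Filter.Tendsto (fun _ : ℕ => ((1:ℕ) : ℤ_[p])) Filter.atTop (nhds ((1:ℕ) : ℤ_[p]))))
    have h2 : Filter.Tendsto (fun _ : ℕ => v ^ (1:ℕ)) Filter.atTop (nhds v) := by
      simpa using (tendsto_const_nhds : Filter.Tendsto (fun _ : ℕ => v) Filter.atTop (nhds v))
    exact tendsto_nhds_unique h1 h2
  refine ⟨⟨f u al, hmemT u hu al, fun a ha => hconv u hu al a ha⟩,
    f, hmemT, fun v hv b a ha => hconv v hv b a ha, hadd, hmulb, hcomp, hone⟩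
end

section
/- Let m ≥ 1 be an integer. Every element u ∈ 1 + 𝔪̃_m can be factored as u = (1 − p·x)·β, where x ∈ 𝒪_0 and β is a unit of 𝒪_F with β − 1 ∈ 𝔪^m (i.e., β ∈ U_F^m). -/
theorem stmt_9
    (p : ℕ) (hp : Nat.Prime p)
    (F : Type) [Field F]
    (OF O0 : Subring F) (hO0F : O0 ≤ OF)
    (pi : F) (hpimem : pi ∈ OF) (hpi0 : pi ≠ 0)
    -- `𝒪_F` is the valuation ring of `F`:
    (hval : ∀ x : F, x ≠ 0 → x ∈ OF ∨ x⁻¹ ∈ OF)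
    -- `𝔪 = π 𝒪_F` is the maximal ideal of `𝒪_F`:
    (hmax : ∀ x ∈ OF, (¬ ∃ y ∈ OF, x = pi * y) → ∃ z ∈ OF, x * z = 1)
    (hpinotunit : ¬ ∃ z ∈ OF, pi * z = 1)
    -- the absolute ramification index `e`, i.e. `p 𝒪_F = 𝔪^e`:
    (e : ℕ) (he : 1 ≤ e)
    (hram : ∃ u ∈ OF, (∃ w ∈ OF, u * w = 1) ∧ (p : F) = pi ^ e * u)
    -- `𝒪_0` is a complete discrete valuation ring with maximal ideal `p 𝒪_0`:
    (hO0dvr : ∀ x ∈ O0, x ≠ (0 : F) →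
      ∃ n : ℕ, ∃ u ∈ O0, (∃ w ∈ O0, u * w = 1) ∧ x = (p : F) ^ n * u)
    (hO0complete : ∀ a : ℕ → F, (∀ n, a n ∈ O0) →
      (∀ n, ∃ y ∈ O0, a (n + 1) - a n = (p : F) ^ n * y) →
      ∃ L ∈ O0, ∀ n, ∃ y ∈ O0, L - a n = (p : F) ^ n * y)
    -- `𝒪_F` is a finitely generated `𝒪_0`-module:
    (hfg : ∃ s : Finset F, (↑s : Set F) ⊆ (OF : Set F) ∧
      ∀ x ∈ OF, ∃ c : F → F, (∀ i ∈ s, c i ∈ O0) ∧ x = ∑ i ∈ s, c i * i)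
    -- the inclusion `𝒪_0 ⊆ 𝒪_F` induces an isomorphism of residue fields:
    (hres_surj : ∀ x ∈ OF, ∃ a ∈ O0, ∃ y ∈ OF, x - a = pi * y)
    (hres_inj : ∀ a ∈ O0, (∃ y ∈ OF, a = pi * y) → ∃ b ∈ O0, a = (p : F) * b)
    -- the residue field is finite of cardinality `q`:
    (q : ℕ)
    (hq : ∃ s : Finset F, s.card = q ∧ (↑s : Set F) ⊆ (OF : Set F) ∧
      (∀ x ∈ OF, ∃ a ∈ s, ∃ y ∈ OF, x - a = pi * y) ∧
      (∀ a ∈ s, ∀ b ∈ s, (∃ y ∈ OF, a - b = pi * y) → a = b))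
    (m : ℕ) (hm : 1 ≤ m) :
    ∀ u ∈ onePlusSet (mTildeSet p O0 OF pi m),
      ∃ x ∈ O0, ∃ beta : F, beta ∈ OF ∧ (∃ g ∈ OF, beta * g = 1) ∧
        (∃ y ∈ OF, beta - 1 = pi ^ m * y) ∧ u = (1 - (p : F) * x) * beta := by
  obtain ⟨w, hw, hwu, hpw⟩ := hram
  have hunit : ∀ c ∈ OF, ∃ z ∈ OF, (1 + pi * c) * z = 1 := by
    intro c hc
    apply hmax _ (OF.add_mem OF.one_mem (OF.mul_mem hpimem hc))
    rintro ⟨y, hy, hxy⟩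
    exact hpinotunit ⟨y - c, OF.sub_mem hy hc, by linear_combination -hxy⟩
  intro u hu
  obtain ⟨a, ha, b, hb, hab⟩ := hu
  have haF : a ∈ OF := hO0F ha
  have hpa : (p : F) * a = pi * (pi ^ (e - 1) * w * a) := by
    rw [hpw]
    have h1 : pi ^ e = pi * pi ^ (e - 1) := by
      rw [← pow_succ']; congr 1; omega
    rw [h1]; ring
  obtain ⟨z, hz, hzeq⟩ := hunit (pi ^ (e - 1) * w * a)
    (OF.mul_mem (OF.mul_mem (OF.pow_mem hpimem _) hw) haF)
  have hzeq' : (1 + (p : F) * a) * z = 1 := by rw [hpa]; exact hzeq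
  have hbeta : u * z = 1 + pi ^ m * (b * z) := by
    linear_combination z * hab + hzeq'
  have hpm : pi ^ m = pi * pi ^ (m - 1) := by
    rw [← pow_succ']; congr 1; omega
  obtain ⟨g, hg, hgeq⟩ := hunit (pi ^ (m - 1) * (b * z))
    (OF.mul_mem (OF.pow_mem hpimem _) (OF.mul_mem hb hz))
  refine ⟨-a, O0.neg_mem ha, u * z, ?_, ⟨g, hg, ?_⟩, ⟨b * z, OF.mul_mem hb hz, by linear_combination hbeta⟩, by linear_combination -u * hzeq'⟩
  · rw [hbeta]
    exact OF.add_mem OF.one_mem (OF.mul_mem (OF.pow_mem hpimem _) (OF.mul_mem hb hz))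
  · rw [hbeta, hpm]
    linear_combination hgeq
end

section
/- Let c : F^× × F^× → A be a Steinberg symbol. Then for all x, y ∈ F^× there exist units u_0, u, w ∈ 𝒪^× of the valuation ring such that c(x, y) = c(π, u_0) · c(u, w). -/
theorem stmt_13
    (F : Type) [Field F]
    -- `𝒪` is the valuation ring of a surjective discrete valuation on `F`,
    -- with uniformizer `π`:
    (O : Subring F) (pi : F) (hpimem : pi ∈ O) (hpi0 : pi ≠ 0)
    (hpinotunit : ¬ ∃ z ∈ O, pi * z = 1)
    (hval : ∀ x : F, x ≠ 0 → x ∈ O ∨ x⁻¹ ∈ O)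
    (hdisc : ∀ x : F, x ≠ 0 →
      ∃ (n : ℤ) (u : F), u ∈ O ∧ (∃ w ∈ O, u * w = 1) ∧ x = pi ^ n * u)
    -- `c` is a Steinberg symbol with values in the abelian group `A`:
    (A : Type) [CommGroup A]
    (c : F → F → A)
    (hmul_left : ∀ x y z : F, x ≠ 0 → y ≠ 0 → z ≠ 0 → c (x * y) z = c x z * c y z)
    (hmul_right : ∀ x y z : F, x ≠ 0 → y ≠ 0 → z ≠ 0 → c x (y * z) = c x y * c x z)
    (hsteinberg : ∀ x : F, x ≠ 0 → x ≠ 1 → c x (1 - x) = 1)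
    (x y : F) (hx : x ≠ 0) (hy : y ≠ 0) :
    ∃ u0 u w : F,
      (u0 ∈ O ∧ ∃ z ∈ O, u0 * z = 1) ∧
      (u ∈ O ∧ ∃ z ∈ O, u * z = 1) ∧
      (w ∈ O ∧ ∃ z ∈ O, w * z = 1) ∧
      c x y = c pi u0 * c u w := by
  -- notation for "unit of O"
  set U : F → Prop := fun a => a ∈ O ∧ ∃ z ∈ O, a * z = 1 with hUdef
  have hUnz : ∀ a, U a → a ≠ 0 := by
    rintro a ⟨-, z, -, hz⟩ rfl
    simp at hz
  have hUmul : ∀ a b, U a → U b → U (a * b) := by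
    rintro a b ⟨haO, za, hzaO, hza⟩ ⟨hbO, zb, hzbO, hzb⟩
    exact ⟨mul_mem haO hbO, za * zb, mul_mem hzaO hzbO, by
      calc a * b * (za * zb) = (a * za) * (b * zb) := by ring
      _ = 1 := by rw [hza, hzb, mul_one]⟩
  have hU1 : U (1 : F) := ⟨one_mem O, 1, one_mem O, one_mul 1⟩
  have hUneg1 : U (-1 : F) := ⟨neg_mem (one_mem O), -1, neg_mem (one_mem O), by ring⟩
  have hUzpow : ∀ (k : ℤ) (a : F), U a → U (a ^ k) := by
    rintro k a ⟨haO, za, hzaO, hza⟩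
    have hpow : ∀ j : ℕ, U (a ^ j) := by
      intro j
      exact ⟨pow_mem haO j, za ^ j, pow_mem hzaO j, by rw [← mul_pow, hza, one_pow]⟩
    rcases k with j | j
    · simpa using hpow j
    · have h1 := hpow (j + 1)
      have : a ^ (Int.negSucc j) = za ^ (j + 1) := by
        rw [zpow_negSucc]
        exact inv_eq_of_mul_eq_one_right (by rw [← mul_pow, hza, one_pow])
      rw [this]
      exact ⟨pow_mem hzaO _, a ^ (j + 1), pow_mem haO _, by rw [← mul_pow, mul_comm za a, hza, one_pow]⟩
  -- basic symbol identities
  have hone_l : ∀ z : F, z ≠ 0 → c 1 z = 1 := by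
    intro z hz
    have h := hmul_left 1 1 z one_ne_zero one_ne_zero hz
    rw [mul_one] at h
    have : c 1 z * 1 = c 1 z * c 1 z := by rw [mul_one]; exact h
    exact (mul_left_cancel this).symm
  have hone_r : ∀ z : F, z ≠ 0 → c z 1 = 1 := by
    intro z hz
    have h := hmul_right z 1 1 hz one_ne_zero one_ne_zero
    rw [mul_one] at h
    have : c z 1 * 1 = c z 1 * c z 1 := by rw [mul_one]; exact h
    exact (mul_left_cancel this).symm
  have hinv_l : ∀ a z : F, a ≠ 0 → z ≠ 0 → c a⁻¹ z = (c a z)⁻¹ := by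
    intro a z ha hz
    have h := hmul_left a a⁻¹ z ha (inv_ne_zero ha) hz
    rw [mul_inv_cancel₀ ha, hone_l z hz] at h
    exact eq_inv_of_mul_eq_one_right h.symm
  have hinv_r : ∀ a z : F, a ≠ 0 → z ≠ 0 → c a z⁻¹ = (c a z)⁻¹ := by
    intro a z ha hz
    have h := hmul_right a z z⁻¹ ha hz (inv_ne_zero hz)
    rw [mul_inv_cancel₀ hz, hone_r a ha] at h
    exact eq_inv_of_mul_eq_one_right h.symm
  have hzpow_l : ∀ (k : ℤ) (a z : F), a ≠ 0 → z ≠ 0 → c (a ^ k) z = (c a z) ^ k := by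
    intro k a z ha hz
    induction k using Int.induction_on with
    | zero => simpa using hone_l z hz
    | succ j ih =>
        rw [zpow_add_one₀ ha, hmul_left _ a z (zpow_ne_zero j ha) ha hz, ih,
          zpow_add_one]
    | pred j ih =>
        rw [zpow_sub_one₀ ha, hmul_left _ a⁻¹ z (zpow_ne_zero (-j) ha) (inv_ne_zero ha) hz,
          ih, hinv_l a z ha hz, zpow_sub_one]
  have hzpow_r : ∀ (k : ℤ) (a z : F), a ≠ 0 → z ≠ 0 → c a (z ^ k) = (c a z) ^ k := by
    intro k a z ha hz
    induction k using Int.induction_on with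
    | zero => simpa using hone_r a ha
    | succ j ih =>
        rw [zpow_add_one₀ hz, hmul_right a _ z ha (zpow_ne_zero j hz) hz, ih,
          zpow_add_one]
    | pred j ih =>
        rw [zpow_sub_one₀ hz, hmul_right a _ z⁻¹ ha (zpow_ne_zero (-j) hz) (inv_ne_zero hz),
          ih, hinv_r a z ha hz, zpow_sub_one]
  -- c a (-a) = 1
  have hneg : ∀ a : F, a ≠ 0 → c a (-a) = 1 := by
    intro a ha
    by_cases ha1 : a = 1
    · subst ha1; exact hone_l (-1) (by norm_num)
    · have h1 : (1 : F) - a ≠ 0 := sub_ne_zero.mpr (Ne.symm ha1)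
      have hainv1 : a⁻¹ ≠ 1 := by
        intro h; exact ha1 (by rw [← inv_inv a, h, inv_one])
      have h2 : (1 : F) - a⁻¹ ≠ 0 := sub_ne_zero.mpr (Ne.symm hainv1)
      have key : -a = (1 - a) * (1 - a⁻¹)⁻¹ := by
        rw [← div_eq_mul_inv, eq_div_iff h2]
        field_simp
        ring
      rw [key, hmul_right a _ _ ha h1 (inv_ne_zero h2), hsteinberg a ha ha1, one_mul,
        hinv_r a _ ha h2]
      have : c a (1 - a⁻¹) = (c a⁻¹ (1 - a⁻¹))⁻¹ := by
        rw [hinv_l a _ ha h2, inv_inv]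
      rw [this, hsteinberg a⁻¹ (inv_ne_zero ha) hainv1, inv_one, inv_one]
  -- antisymmetry
  have hskew : ∀ a b : F, a ≠ 0 → b ≠ 0 → c a b * c b a = 1 := by
    intro a b ha hb
    have hab : a * b ≠ 0 := mul_ne_zero ha hb
    have h := hneg (a * b) hab
    rw [hmul_left a b _ ha hb (neg_ne_zero.mpr hab)] at h
    have e1 : -(a * b) = -a * b := by ring
    have e2 : -(a * b) = b * (-a) := by ring
    have h1 : c a (-(a * b)) = c a b := by
      have : -(a * b) = (-a) * b := by ring
      rw [this, hmul_right a _ b ha (neg_ne_zero.mpr ha) hb, hneg a ha, one_mul]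
    have h2 : c b (-(a * b)) = c b a := by
      have : -(a * b) = a * (-b) := by ring
      rw [this, hmul_right b a _ hb ha (neg_ne_zero.mpr hb), hneg b hb, mul_one]
    rw [h1, h2] at h
    exact h
  -- c a a = c a (-1) ⁻¹
  have hself : ∀ a : F, a ≠ 0 → c a a = (c a (-1 : F))⁻¹ := by
    intro a ha
    have h := hneg a ha
    have : -a = (-1 : F) * a := by ring
    rw [this, hmul_right a _ a ha (by norm_num) ha] at h
    exact eq_inv_of_mul_eq_one_right h
  -- decompose x and y
  obtain ⟨m, u, huO, ⟨zu, hzuO, hzu⟩, hxe⟩ := hdisc x hx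
  obtain ⟨n, w, hwO, ⟨zw, hzwO, hzw⟩, hye⟩ := hdisc y hy
  have hUu : U u := ⟨huO, zu, hzuO, hzu⟩
  have hUw : U w := ⟨hwO, zw, hzwO, hzw⟩
  have hu : u ≠ 0 := hUnz u hUu
  have hw : w ≠ 0 := hUnz w hUw
  have hpim : pi ^ m ≠ 0 := zpow_ne_zero m hpi0
  have hpin : pi ^ n ≠ 0 := zpow_ne_zero n hpi0
  -- the unit u0
  refine ⟨(-1 : F) ^ (m * n) * w ^ m * u ^ (-n), u, w, ?_, hUu, hUw, ?_⟩
  · exact hUmul _ _ (hUmul _ _ (hUzpow _ _ hUneg1) (hUzpow _ _ hUw)) (hUzpow _ _ hUu)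
  · have hn1 : ((-1 : F)) ^ (m * n) ≠ 0 := zpow_ne_zero _ (by norm_num)
    have hwm : w ^ m ≠ 0 := zpow_ne_zero _ hw
    have hun : u ^ (-n) ≠ 0 := zpow_ne_zero _ hu
    -- expand LHS
    have expand : c x y =
        (c pi pi) ^ (n * m) * (c pi w) ^ m * ((c u pi) ^ n * c u w) := by
      rw [hxe, hye]
      rw [hmul_left _ u _ hpim hu (mul_ne_zero hpin hw),
        hmul_right _ _ w hpim hpin hw,
        hmul_right u _ w hu hpin hw,
        hzpow_l m pi (pi ^ n) hpi0 hpin,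
        hzpow_r n pi pi hpi0 hpi0,
        hzpow_l m pi w hpi0 hw,
        hzpow_r n u pi hu hpi0]
      rw [← zpow_mul]
    -- rewrite the two awkward factors
    have hcpipi : c pi pi = (c pi (-1 : F))⁻¹ := hself pi hpi0
    have hcupi : c u pi = (c pi u)⁻¹ :=
      eq_inv_of_mul_eq_one_right (hskew pi u hpi0 hu)
    -- expand RHS
    have expand2 : c pi ((-1 : F) ^ (m * n) * w ^ m * u ^ (-n)) =
        (c pi (-1 : F)) ^ (m * n) * (c pi w) ^ m * (c pi u) ^ (-n) := by
      rw [hmul_right pi _ _ hpi0 (mul_ne_zero hn1 hwm) hun,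
        hmul_right pi _ _ hpi0 hn1 hwm,
        hzpow_r (m * n) pi (-1 : F) hpi0 (by norm_num),
        hzpow_r m pi w hpi0 hw,
        hzpow_r (-n) pi u hpi0 hu]
    have hparity : ∀ k : ℤ, (c pi (-1 : F)) ^ (-k) = (c pi (-1 : F)) ^ k := by
      intro k
      have h2 : (c pi (-1 : F)) ^ (2 : ℤ) = 1 := by
        have := hmul_right pi (-1 : F) (-1 : F) hpi0 (by norm_num) (by norm_num)
        rw [show ((-1 : F) * (-1 : F)) = 1 by ring, hone_r pi hpi0] at this
        rw [zpow_two]; exact this.symm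
      have hk : (c pi (-1:F)) ^ k * (c pi (-1:F)) ^ k = 1 := by
        rw [← zpow_add, ← two_mul, zpow_mul, h2, one_zpow]
      rw [zpow_neg]
      exact inv_eq_of_mul_eq_one_left hk
    rw [expand, expand2, hcpipi, hcupi, inv_zpow', inv_zpow', hparity, mul_comm n m]
    exact (mul_assoc _ _ _).symm
end

section
/- Let c : F^× × F^× → A be a Steinberg symbol. Then for every u ∈ U^2 (i.e., u a unit of 𝒪 with u − 1 ∈ 𝔪^2) there exist a, b ∈ U^1 (units of 𝒪 with a − 1, b − 1 ∈ 𝔪) such that c(π, u) = c(a, b). -/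
/-- Elements of `1 + 𝔪` are units of the valuation ring. -/
lemma u1_unit
    (F : Type) [Field F]
    (O : Subring F) (pi : F) (hpimem : pi ∈ O) (hpi0 : pi ≠ 0)
    (hpinotunit : ¬ ∃ z ∈ O, pi * z = 1)
    (hdisc : ∀ x : F, x ≠ 0 →
      ∃ (n : ℤ) (u : F), u ∈ O ∧ (∃ w ∈ O, u * w = 1) ∧ x = pi ^ n * u)
    (w m : F) (hm : m ∈ O) (hw : w = 1 + pi * m) :
    w ∈ O ∧ (∃ z ∈ O, w * z = 1) ∧ ∃ y ∈ O, w - 1 = pi * y := by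
  have hwO : w ∈ O := by
    rw [hw]; exact O.add_mem O.one_mem (O.mul_mem hpimem hm)
  have hwne : w ≠ 0 := by
    intro h0
    apply hpinotunit
    refine ⟨-m, O.neg_mem hm, ?_⟩
    have : (1 : F) + pi * m = 0 := by rw [← hw, h0]
    linear_combination -this
  refine ⟨hwO, ?_, ⟨m, hm, by rw [hw]; ring⟩⟩
  obtain ⟨n, v, hvO, ⟨z, hzO, hvz⟩, hwv⟩ := hdisc w hwne
  rcases le_or_gt 1 n with hn | hn
  · -- w ∈ 𝔪, contradiction
    exfalso
    apply hpinotunit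
    refine ⟨pi ^ (n - 1).toNat * v - m, O.sub_mem (O.mul_mem (O.pow_mem hpimem _) hvO) hm, ?_⟩
    have hpow : pi ^ n = pi * pi ^ (n - 1).toNat := by
      rw [← zpow_natCast, Int.toNat_of_nonneg (by omega)]
      rw [← zpow_one_add₀ hpi0]
      ring_nf
    have : w = pi * (pi ^ (n - 1).toNat * v) := by rw [hwv, hpow]; ring
    have h1 : (1 : F) = w - pi * m := by rw [hw]; ring
    rw [mul_sub, ← this, ← h1]
  · -- n ≤ 0 : w⁻¹ = π^(-n) * z ∈ 𝒪
    refine ⟨pi ^ (-n).toNat * z, O.mul_mem (O.pow_mem hpimem _) hzO, ?_⟩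
    have hpow : (pi ^ (-n).toNat : F) = pi ^ (-n : ℤ) := by
      rw [← zpow_natCast, Int.toNat_of_nonneg (by omega)]
    rw [hwv, hpow]
    have : pi ^ n * pi ^ (-n : ℤ) = 1 := by
      rw [← zpow_add₀ hpi0]; simp
    calc pi ^ n * v * (pi ^ (-n : ℤ) * z)
        = (pi ^ n * pi ^ (-n : ℤ)) * (v * z) := by ring
      _ = 1 := by rw [this, hvz, one_mul]

theorem stmt_14
    (F : Type) [Field F]
    -- `𝒪` is the valuation ring of a surjective discrete valuation on `F`,
    -- with uniformizer `π`:
    (O : Subring F) (pi : F) (hpimem : pi ∈ O) (hpi0 : pi ≠ 0)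
    (hpinotunit : ¬ ∃ z ∈ O, pi * z = 1)
    (hval : ∀ x : F, x ≠ 0 → x ∈ O ∨ x⁻¹ ∈ O)
    (hdisc : ∀ x : F, x ≠ 0 →
      ∃ (n : ℤ) (u : F), u ∈ O ∧ (∃ w ∈ O, u * w = 1) ∧ x = pi ^ n * u)
    -- `c` is a Steinberg symbol with values in the abelian group `A`:
    (A : Type) [CommGroup A]
    (c : F → F → A)
    (hmul_left : ∀ x y z : F, x ≠ 0 → y ≠ 0 → z ≠ 0 → c (x * y) z = c x z * c y z)
    (hmul_right : ∀ x y z : F, x ≠ 0 → y ≠ 0 → z ≠ 0 → c x (y * z) = c x y * c x z)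
    (hsteinberg : ∀ x : F, x ≠ 0 → x ≠ 1 → c x (1 - x) = 1)
    -- `u ∈ U^2`, i.e. `u` is a unit of `𝒪` with `u - 1 ∈ 𝔪^2`:
    (u : F) (humem : u ∈ O) (huunit : ∃ z ∈ O, u * z = 1)
    (hu2 : ∃ y ∈ O, u - 1 = pi ^ 2 * y) :
    ∃ a b : F,
      (a ∈ O ∧ (∃ z ∈ O, a * z = 1) ∧ ∃ y ∈ O, a - 1 = pi * y) ∧
      (b ∈ O ∧ (∃ z ∈ O, b * z = 1) ∧ ∃ y ∈ O, b - 1 = pi * y) ∧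
      c pi u = c a b := by
  obtain ⟨y, hyO, hy⟩ := hu2
  obtain ⟨uz, huzO, huz⟩ := huunit
  have hune : u ≠ 0 := fun h => one_ne_zero (by rw [← huz, h, zero_mul] : (1:F) = 0)
  have hpine1 : pi ≠ 1 := fun h => hpinotunit ⟨1, O.one_mem, by rw [h, one_mul]⟩
  have h1pine : (1 : F) - pi ≠ 0 := sub_ne_zero.mpr (Ne.symm hpine1)
  -- t := 1 - π y (1 - π)
  set t : F := 1 + pi * (-(y * (1 - pi))) with ht
  have htmem : -(y * (1 - pi)) ∈ O := O.neg_mem (O.mul_mem hyO (O.sub_mem O.one_mem hpimem))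
  obtain ⟨htO, ⟨tz, htzO, htz⟩, _⟩ :=
    u1_unit F O pi hpimem hpi0 hpinotunit hdisc t _ htmem rfl
  have htne : t ≠ 0 := fun h => one_ne_zero (by rw [← htz, h, zero_mul] : (1:F) = 0)
  -- b := 1 - π t = (1 - π) * u
  set b : F := 1 - pi * t with hb
  have hbu : b = (1 - pi) * u := by
    have : u = 1 + pi ^ 2 * y := by linear_combination hy
    rw [hb, ht, this]; ring
  obtain ⟨hbO, ⟨bz, hbzO, hbz⟩, hbU⟩ :=
    u1_unit F O pi hpimem hpi0 hpinotunit hdisc b (-t) (O.neg_mem htO) (by rw [hb]; ring)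
  have hbne : b ≠ 0 := fun h => one_ne_zero (by rw [← hbz, h, zero_mul] : (1:F) = 0)
  -- a := t⁻¹
  have htinv : t⁻¹ = tz := by field_simp; linear_combination -htz
  have haO : t⁻¹ ∈ O := htinv ▸ htzO
  have hainv : ∃ z ∈ O, t⁻¹ * z = 1 := ⟨t, htO, by field_simp⟩
  have haU : ∃ y' ∈ O, t⁻¹ - 1 = pi * y' := by
    refine ⟨t⁻¹ * (y * (1 - pi)), O.mul_mem haO (O.mul_mem hyO (O.sub_mem O.one_mem hpimem)), ?_⟩
    have h1 : t⁻¹ * t = 1 := inv_mul_cancel₀ htne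
    have h2 : t = 1 + pi * (-(y * (1 - pi))) := ht
    field_simp
    linear_combination -h2
  refine ⟨t⁻¹, b, ⟨haO, hainv, haU⟩, ⟨hbO, ⟨bz, hbzO, hbz⟩, hbU⟩, ?_⟩
  have htinvne : t⁻¹ ≠ 0 := inv_ne_zero htne
  -- c(π, 1) = 1
  have hc1 : c pi 1 = 1 := by
    have := hmul_right pi 1 1 hpi0 one_ne_zero one_ne_zero
    rw [mul_one] at this
    have h : c pi 1 * 1 = c pi 1 * c pi 1 := by rw [mul_one]; exact this
    exact (mul_left_cancel h).symm
  -- c(π, 1-π) = 1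
  have hc2 : c pi (1 - pi) = 1 := hsteinberg pi hpi0 hpine1
  -- c(π, (1-π)⁻¹) = 1
  have h1pinvne : ((1:F) - pi)⁻¹ ≠ 0 := inv_ne_zero h1pine
  have hc3 : c pi ((1 - pi)⁻¹) = 1 := by
    have := hmul_right pi (1 - pi) (1 - pi)⁻¹ hpi0 h1pine h1pinvne
    rw [mul_inv_cancel₀ h1pine, hc1, hc2, one_mul] at this
    exact this.symm
  -- c(π, u) = c(π, b)
  have hub : u = b * (1 - pi)⁻¹ := by rw [hbu]; field_simp
  have hc4 : c pi u = c pi b := by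
    rw [hub, hmul_right pi b ((1 - pi)⁻¹) hpi0 hbne h1pinvne, hc3, mul_one]
  -- Steinberg: c(πt, b) = 1 since b = 1 - πt
  have hptne1 : pi * t ≠ 1 := fun h => hpinotunit ⟨t, htO, h⟩
  have hptne0 : pi * t ≠ 0 := mul_ne_zero hpi0 htne
  have hc5 : c (pi * t) b = 1 := by
    rw [hb]; exact hsteinberg (pi * t) hptne0 hptne1
  have hc6 : c pi b * c t b = 1 := by
    rw [← hmul_left pi t b hpi0 htne hbne]; exact hc5
  -- c(1, b) = 1
  have hc7 : c 1 b = 1 := by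
    have := hmul_left 1 1 b one_ne_zero one_ne_zero hbne
    rw [mul_one] at this
    have h : c 1 b * 1 = c 1 b * c 1 b := by rw [mul_one]; exact this
    exact (mul_left_cancel h).symm
  have hc8 : c t b * c t⁻¹ b = 1 := by
    rw [← hmul_left t t⁻¹ b htne htinvne hbne, mul_inv_cancel₀ htne]; exact hc7
  rw [hc4]
  have : c pi b = c t⁻¹ b := by
    have e1 : c pi b = (c t b)⁻¹ := eq_inv_of_mul_eq_one_right (by rw [mul_comm]; exact hc6)
    have e2 : c t⁻¹ b = (c t b)⁻¹ := eq_inv_of_mul_eq_one_left (by rw [mul_comm]; exact hc8)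
    rw [e1, e2]
  exact this
end

section
/- Suppose that for each finite place v of F an additive subgroup R_v ⊆ 𝒪_v is given such that R_v = 𝒪_v for all but finitely many v and such that for each v there exists a positive integer N_v with N_v·𝒪_v ⊆ R_v. Then for every adele α ∈ 𝔸_F there exist β ∈ F and an adele r ∈ 𝔸_F whose component at every finite place v lies in R_v (with no constraint at the infinite places), such that α = diag(β) − r. In particular, 𝔸_F = diag(F) + (∏_{v finite} R_v × ∏_{v infinite} F_v). -/
open scoped Multiplicative
open IsDedekindDomain NumberField IsDedekindDomain.HeightOneSpectrum

theorem stmt_15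
    (K : Type) [Field K] [NumberField K]
    -- at each finite place `v`, an additive subgroup `R_v ⊆ 𝒪_v` is given:
    (Rv : ∀ v : HeightOneSpectrum (𝓞 K), AddSubgroup (v.adicCompletion K))
    (hsub : ∀ v : HeightOneSpectrum (𝓞 K),
      (Rv v : Set (v.adicCompletion K)) ⊆ (v.adicCompletionIntegers K : Set (v.adicCompletion K)))
    -- `R_v = 𝒪_v` for all but finitely many `v`:
    (hae : {v : HeightOneSpectrum (𝓞 K) |
      (Rv v : Set (v.adicCompletion K)) ≠
        (v.adicCompletionIntegers K : Set (v.adicCompletion K))}.Finite)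
    -- for each `v` there is a positive integer `N_v` with `N_v · 𝒪_v ⊆ R_v`:
    (hN : ∀ v : HeightOneSpectrum (𝓞 K), ∃ N : ℕ, 0 < N ∧
      ∀ x ∈ v.adicCompletionIntegers K, (N : v.adicCompletion K) * x ∈ Rv v) :
    -- every adele is the difference of a principal adele and an adele whose components at
    -- all finite places lie in the `R_v` (with no constraint at the infinite places):
    ∀ α : AdeleRing (𝓞 K) K, ∃ (β : K) (r : AdeleRing (𝓞 K) K),
      (∀ v : HeightOneSpectrum (𝓞 K), r.2 v ∈ Rv v) ∧
      α = algebraMap K (AdeleRing (𝓞 K) K) β - r := by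
  classical
  intro α
  choose N Npos NmemR using hN
  have hwfin : {v : HeightOneSpectrum (𝓞 K) | α.2 v ∉ v.adicCompletionIntegers K}.Finite :=
    Filter.eventually_cofinite.mp α.2.2
  have hSfin : ({v : HeightOneSpectrum (𝓞 K) |
      (Rv v : Set (v.adicCompletion K)) ≠
        (v.adicCompletionIntegers K : Set (v.adicCompletion K))} ∪
      {v : HeightOneSpectrum (𝓞 K) | α.2 v ∉ v.adicCompletionIntegers K}).Finite :=
    hae.union hwfin
  set S : Finset (HeightOneSpectrum (𝓞 K)) := hSfin.toFinset with hSdef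
  set M : ℕ := ∏ v ∈ S, N v with hMdef
  have hMpos : 0 < M := Finset.prod_pos fun v _ => Npos v
  have hMK : (M : K) ≠ 0 := Nat.cast_ne_zero.2 hMpos.ne'
  -- density: approximants `t v ∈ K` of `α.2 v`
  have hdense : ∀ v : HeightOneSpectrum (𝓞 K), ∃ t : K,
      Valued.v ((t : v.adicCompletion K) - α.2 v) <
        Valued.v (((M : K) : v.adicCompletion K)) := by
    intro v
    have hγ0 : Valued.v (((M : K) : v.adicCompletion K)) ≠ 0 := by
      rw [valuedAdicCompletion_eq_valuation']
      exact (Valuation.ne_zero_iff _).2 hMK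
    have hU : {y : v.adicCompletion K |
        Valued.v (y - α.2 v) < ((isUnit_iff_ne_zero.2 hγ0).unit : WithZero (Multiplicative ℤ))} ∈ nhds (α.2 v) :=
      Valued.mem_nhds.2 ⟨Units.mk0 _ (fun h => hγ0 (Valued.v.restrict_eq_zero_iff.mp h) : Valued.v.restrict (((M : K) : v.adicCompletion K)) ≠ 0),
        fun y hy => Valued.v.restrict_lt_iff.mp hy⟩
    have hd : DenseRange ((↑) : K → v.adicCompletion K) := by
      letI : UniformSpace K := v.adicValued.toUniformSpace
      exact denseRange_algebraMap K v
    obtain ⟨y, hy, tv, rfl⟩ := mem_closure_iff_nhds.1 (hd (α.2 v)) _ hU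
    refine ⟨tv, ?_⟩
    rw [← (isUnit_iff_ne_zero.2 hγ0).unit_spec]
    exact hy
  choose t ht using hdense
  -- common denominator of the `t v`, `v ∈ S`
  obtain ⟨d, hd⟩ :=
    IsLocalization.exist_integer_multiples_of_finset (nonZeroDivisors (𝓞 K)) (S.image t)
  have hd0 : (d : 𝓞 K) ≠ 0 := nonZeroDivisors.coe_ne_zero d
  set δ : K := algebraMap (𝓞 K) K (d : 𝓞 K) with hδdef
  have hδ0 : δ ≠ 0 := fun h => hd0 (IsFractionRing.injective (𝓞 K) K (by rwa [map_zero]))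
  have hvδ0 : ∀ v : HeightOneSpectrum (𝓞 K), v.valuation K δ ≠ 0 :=
    fun v => (Valuation.ne_zero_iff _).2 hδ0
  have hdt : ∀ v ∈ S, ∃ a : 𝓞 K, algebraMap (𝓞 K) K a = δ * t v := by
    intro v hv
    obtain ⟨a, ha⟩ := hd (t v) (Finset.mem_image_of_mem t hv)
    exact ⟨a, by rwa [Algebra.smul_def] at ha⟩
  choose a ha using hdt
  set Md : 𝓞 K := (M : 𝓞 K) * (d : 𝓞 K) with hMddef
  have hMd0 : Md ≠ 0 := mul_ne_zero (Nat.cast_ne_zero.2 hMpos.ne') hd0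
  -- exponents
  have hn : ∀ v : HeightOneSpectrum (𝓞 K), ∃ m : ℕ,
      ((Multiplicative.ofAdd (-(m : ℤ)) : Multiplicative ℤ) : WithZero (Multiplicative ℤ)) ≤ v.intValuation Md := by
    intro v
    have h0 : v.intValuation Md ≠ 0 := by
      rw [intValuation_apply]; exact intValuation_ne_zero v Md hMd0
    obtain ⟨u, hu⟩ := WithZero.ne_zero_iff_exists.1 h0
    refine ⟨(-(Multiplicative.toAdd u)).toNat, ?_⟩
    rw [← hu]
    exact WithZero.coe_le_coe.mpr (Multiplicative.toAdd_le.mp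
      (by simp only [toAdd_ofAdd]; omega))
  choose n hnle using hn
  -- the CRT finset
  have hTfin : ((S : Set (HeightOneSpectrum (𝓞 K))) ∪
      {v : HeightOneSpectrum (𝓞 K) | v.asIdeal ∣ Ideal.span {Md}}).Finite :=
    S.finite_toSet.union (Ideal.finite_factors (by simpa [Ideal.span_singleton_eq_bot] using hMd0))
  set T : Finset (HeightOneSpectrum (𝓞 K)) := hTfin.toFinset with hTdef
  have hST : S ⊆ T := fun v hv => hTfin.mem_toFinset.2 (Or.inl hv)
  set x : HeightOneSpectrum (𝓞 K) → 𝓞 K := fun v => if hv : v ∈ S then a v hv else 0 with hxdef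
  obtain ⟨b, hb⟩ := IsDedekindDomain.exists_forall_sub_mem_ideal (s := T)
    (fun v => v.asIdeal) n (fun v _ => v.prime)
    (fun v _ u _ hvu h => hvu (by cases v; cases u; simpa using h))
    (fun v => x v)
  have key : ∀ v ∈ T, v.intValuation (b - x v) ≤ v.intValuation Md := by
    intro v hv
    refine le_trans ?_ (hnle v)
    rw [intValuation_apply]
    exact (intValuation_le_pow_iff_dvd v _ _).2 (Ideal.dvd_span_singleton.2 (hb v hv))
  set β : K := algebraMap (𝓞 K) K b / δ with hβdef
  have hβδ : β * δ = algebraMap (𝓞 K) K b := div_mul_cancel₀ _ hδ0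
  -- β is integral outside S
  have hβint : ∀ v : HeightOneSpectrum (𝓞 K), v ∉ S → v.valuation K β ≤ 1 := by
    intro v hvS
    have hbd : v.intValuation b ≤ v.intValuation (d : 𝓞 K) := by
      by_cases hvT : v ∈ T
      · have hk := key v hvT
        have hx0 : x v = 0 := dif_neg hvS
        rw [hx0, sub_zero] at hk
        refine hk.trans ?_
        rw [hMddef, map_mul]
        exact mul_le_of_le_one_left' (by rw [intValuation_apply]; exact intValuation_le_one v _)
      · have hnd : ¬ v.asIdeal ∣ Ideal.span {Md} :=
          fun h => hvT (hTfin.mem_toFinset.2 (Or.inr h))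
        have h1 : v.intValuation Md = 1 := by
          rcases (intValuation_le_one v Md).lt_or_eq with h | h
          · exact absurd ((intValuation_lt_one_iff_dvd v Md).1 h) hnd
          · rw [intValuation_apply]; exact h
        have hd1 : v.intValuation (d : 𝓞 K) = 1 := by
          have hmul : v.intValuation ((M : 𝓞 K)) * v.intValuation ((d : 𝓞 K)) = 1 := by
            rw [← map_mul, ← hMddef]; exact h1
          refine le_antisymm (by rw [intValuation_apply]; exact intValuation_le_one v _) ?_
          calc (1 : WithZero (Multiplicative ℤ)) = _ := hmul.symm
            _ ≤ v.intValuation ((d : 𝓞 K)) :=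
              mul_le_of_le_one_left' (by rw [intValuation_apply]; exact intValuation_le_one v _)
        rw [hd1, intValuation_apply]; exact intValuation_le_one v _
    have h5 : v.valuation K β * v.valuation K δ ≤ 1 * v.valuation K δ := by
      have e : v.valuation K β * v.valuation K δ = v.intValuation b := by
        rw [← map_mul, hβδ, valuation_of_algebraMap]
      rw [e, one_mul, hδdef, valuation_of_algebraMap]
      exact hbd
    exact le_of_mul_le_mul_right h5 (lt_of_le_of_ne zero_le' (Ne.symm (hvδ0 v)))
  refine ⟨β, algebraMap K (AdeleRing (𝓞 K) K) β - α, ?_, by ring⟩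
  intro v
  show (β : v.adicCompletion K) - α.2 v ∈ Rv v
  have natc : ∀ m : ℕ, ((m : K) : v.adicCompletion K) = (m : v.adicCompletion K) := fun m => by
    induction m with
    | zero => rw [Nat.cast_zero, Nat.cast_zero, adicCompletion.coe_zero]
    | succ k ih => rw [Nat.cast_succ, Nat.cast_succ, adicCompletion.coe_add, adicCompletion.coe_one, ih]
  by_cases hvS : v ∈ S
  · -- the main case
    have hvT := hST hvS
    have hx : x v = a v hvS := dif_pos hvS
    have hβt : Valued.v ((β : v.adicCompletion K) - (t v : v.adicCompletion K)) ≤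
        Valued.v (((M : K) : v.adicCompletion K)) := by
      have e1 : (β : v.adicCompletion K) - (t v : v.adicCompletion K) =
          ((β - t v : K) : v.adicCompletion K) := by
        letI : UniformSpace K := v.adicValued.toUniformSpace
        exact sub_eq_of_eq_add (by rw [← adicCompletion.coe_add, sub_add_cancel])
      rw [e1, valuedAdicCompletion_eq_valuation', valuedAdicCompletion_eq_valuation']
      have e2 : (β - t v) * δ = algebraMap (𝓞 K) K (b - x v) := by
        have h2 : t v * δ = algebraMap (𝓞 K) K (a v hvS) := by
          rw [mul_comm]; exact (ha v hvS).symm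
        rw [sub_mul, hβδ, h2, map_sub, hx]
      have e3 : v.valuation K ((M : K)) * v.valuation K δ = v.intValuation Md := by
        rw [← map_mul,
          show ((M : ℕ) : K) * δ = algebraMap (𝓞 K) K Md by
            rw [hMddef, map_mul, map_natCast],
          valuation_of_algebraMap]
      have e4 : v.valuation K (β - t v) * v.valuation K δ = v.intValuation (b - x v) := by
        rw [← map_mul, e2, valuation_of_algebraMap]
      have h5 : v.valuation K (β - t v) * v.valuation K δ ≤ v.valuation K ((M : K)) * v.valuation K δ := by
        rw [e4, e3]; exact key v hvT
      exact le_of_mul_le_mul_right h5 (lt_of_le_of_ne zero_le' (Ne.symm (hvδ0 v)))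
    have hcv : Valued.v ((β : v.adicCompletion K) - α.2 v) ≤
        Valued.v (((M : K) : v.adicCompletion K)) := by
      have e : (β : v.adicCompletion K) - α.2 v =
          ((β : v.adicCompletion K) - (t v : v.adicCompletion K)) +
            ((t v : v.adicCompletion K) - α.2 v) := by ring
      rw [e]
      exact le_trans (Valued.v.map_add _ _) (max_le hβt (le_of_lt (ht v)))
    obtain ⟨M', hM'⟩ : ∃ M' : ℕ, M = N v * M' :=
      ⟨∏ u ∈ S.erase v, N u, (Finset.mul_prod_erase S N hvS).symm⟩
    have hvN0 : Valued.v ((N v : v.adicCompletion K)) ≠ 0 := by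
      rw [← natc, valuedAdicCompletion_eq_valuation']
      exact (Valuation.ne_zero_iff _).2 (Nat.cast_ne_zero.2 (Npos v).ne')
    have hNK0 : ((N v : ℕ) : v.adicCompletion K) ≠ 0 := fun h => hvN0 (by rw [h, map_zero])
    have hM'int : Valued.v ((M' : v.adicCompletion K)) ≤ 1 := by
      rw [← natc, valuedAdicCompletion_eq_valuation',
        show ((M' : ℕ) : K) = algebraMap (𝓞 K) K ((M' : ℕ) : 𝓞 K) from (map_natCast _ M').symm]
      exact valuation_le_one v _
    have hMN : Valued.v (((M : K) : v.adicCompletion K)) ≤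
        Valued.v ((N v : v.adicCompletion K)) := by
      rw [natc, hM']
      push_cast
      rw [map_mul]
      exact mul_le_of_le_one_right' hM'int
    have hxmem : ((β : v.adicCompletion K) - α.2 v) * ((N v : v.adicCompletion K))⁻¹ ∈
        v.adicCompletionIntegers K := by
      rw [mem_adicCompletionIntegers, map_mul, map_inv₀]
      calc Valued.v ((β : v.adicCompletion K) - α.2 v) * (Valued.v ((N v : v.adicCompletion K)))⁻¹
          ≤ Valued.v ((N v : v.adicCompletion K)) *
              (Valued.v ((N v : v.adicCompletion K)))⁻¹ :=
            mul_le_mul_left (hcv.trans hMN) _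
        _ = 1 := mul_inv_cancel₀ hvN0
    have hmem := NmemR v _ hxmem
    have e : (N v : v.adicCompletion K) *
        (((β : v.adicCompletion K) - α.2 v) * ((N v : v.adicCompletion K))⁻¹) =
        (β : v.adicCompletion K) - α.2 v := by
      field_simp
    rwa [e] at hmem
  · -- outside S everything is trivial
    have hmem : v ∉ ({v : HeightOneSpectrum (𝓞 K) |
        (Rv v : Set (v.adicCompletion K)) ≠
          (v.adicCompletionIntegers K : Set (v.adicCompletion K))} ∪
        {v : HeightOneSpectrum (𝓞 K) | α.2 v ∉ v.adicCompletionIntegers K}) :=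
      fun h => hvS (hSfin.mem_toFinset.2 h)
    rw [Set.mem_union] at hmem
    push_neg at hmem
    obtain ⟨hR, hα⟩ := hmem
    rw [Set.mem_setOf_eq, not_not] at hR
    rw [Set.mem_setOf_eq, not_not] at hα
    have hβv : (β : v.adicCompletion K) ∈ v.adicCompletionIntegers K := by
      rw [mem_adicCompletionIntegers, valuedAdicCompletion_eq_valuation']
      exact hβint v hvS
    have hfin : (β : v.adicCompletion K) - α.2 v ∈ v.adicCompletionIntegers K :=
      sub_mem hβv hα
    rw [← SetLike.mem_coe, hR]
    exact hfin
end
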